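/- arXiv:2510.07756 — 7 statements merged into one kernel-verified Lean document; each statement's English description precedes it below -/
import Mathlib

section
/- Optimal control-variate coefficient (Theorem 2): for integers 1 ≤ K ≤ M ≤ N, the coefficient a* = ρ σ_Y / σ_X minimizes the variance of the two-level estimator, i.e. for every a ∈ ℝ, Var(Ȳ_K + a* (X̄_N − X̄_M)) ≤ Var(Ȳ_K + a (X̄_N − X̄_M)). -/
open MeasureTheory ProbabilityTheory Finset
open scoped ENNReal

/-- Sample mean of the first `n` samples of the sequence `X`. -/
noncomputable def sampleMean {Ω : Type} (n : ℕ) (X : ℕ → Ω → ℝ) : Ω → ℝ :=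
  fun ω => (n : ℝ)⁻¹ * ∑ j ∈ Finset.range n, X j ω

/-- Covariance of two real random variables. -/
noncomputable def covar {Ω : Type} [MeasurableSpace Ω] (μ : Measure Ω) (X Y : Ω → ℝ) : ℝ :=
  ∫ ω, (X ω - μ[X]) * (Y ω - μ[Y]) ∂μ

section aux
variable {Ω : Type} [MeasurableSpace Ω] {μ : Measure Ω}

lemma my_int_mul [IsProbabilityMeasure μ] {f g : Ω → ℝ} (hf : MemLp f 2 μ) (hg : MemLp g 2 μ) :
    Integrable (fun ω => f ω * g ω) μ := by
  rw [← memLp_one_iff_integrable]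
  have h : (1 : ℝ≥0∞) / 1 = 1 / 2 + 1 / 2 := by
    rw [ENNReal.div_add_div_same, show (1:ℝ≥0∞)+1 = 2 from one_add_one_eq_two,
      ENNReal.div_self two_ne_zero ENNReal.ofNat_ne_top, div_one]
  exact hg.smul (φ := f) (r := 1) hf

lemma my_var_add [IsProbabilityMeasure μ] {U V : Ω → ℝ} (hU : MemLp U 2 μ) (hV : MemLp V 2 μ) :
    variance (fun ω => U ω + V ω) μ
      = variance U μ + 2 * covar μ U V + variance V μ := by
  have hU' : MemLp (fun ω => U ω - μ[U]) 2 μ := hU.sub (memLp_const _)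
  have hV' : MemLp (fun ω => V ω - μ[V]) 2 μ := hV.sub (memLp_const _)
  have hU2 : Integrable (fun ω => (U ω - μ[U]) * (U ω - μ[U])) μ := my_int_mul hU' hU'
  have hV2 : Integrable (fun ω => (V ω - μ[V]) * (V ω - μ[V])) μ := my_int_mul hV' hV'
  have hUV : Integrable (fun ω => (U ω - μ[U]) * (V ω - μ[V])) μ := my_int_mul hU' hV'
  have hm : μ[fun ω => U ω + V ω] = μ[U] + μ[V] :=
    integral_add (hU.integrable one_le_two) (hV.integrable one_le_two)
  have hvar : ∀ (f : Ω → ℝ), MemLp f 2 μ →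
      variance f μ = ∫ ω, (f ω - μ[f]) * (f ω - μ[f]) ∂μ := by
    intro f hf
    rw [variance_eq_integral hf.aestronglyMeasurable.aemeasurable]
    congr 1 with ω
    simp [sq]
  rw [hvar (fun ω => U ω + V ω) (hU.add hV), hvar _ hU, hvar _ hV]
  simp only [hm]
  have key : ∀ ω, (U ω + V ω - (μ[U] + μ[V])) * (U ω + V ω - (μ[U] + μ[V]))
      = (U ω - μ[U]) * (U ω - μ[U])
        + (2 * ((U ω - μ[U]) * (V ω - μ[V])) + (V ω - μ[V]) * (V ω - μ[V])) := by
    intro ω; ring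
  rw [show (fun ω => (U ω + V ω - (μ[U] + μ[V])) * (U ω + V ω - (μ[U] + μ[V])))
      = fun ω => (U ω - μ[U]) * (U ω - μ[U])
        + (2 * ((U ω - μ[U]) * (V ω - μ[V])) + (V ω - μ[V]) * (V ω - μ[V])) from funext key]
  have hsum : Integrable (fun ω => 2 * ((U ω - μ[U]) * (V ω - μ[V]))
      + (V ω - μ[V]) * (V ω - μ[V])) μ := (hUV.const_mul 2).add hV2
  rw [integral_add hU2 hsum, integral_add (hUV.const_mul 2) hV2, integral_const_mul]
  unfold covar
  ring

lemma my_covar_smul (μ : Measure Ω) (p q : ℝ) (U V : Ω → ℝ) :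
    covar μ (fun ω => p * U ω) (fun ω => q * V ω) = p * q * covar μ U V := by
  unfold covar
  have h : (fun ω => (p * U ω - μ[fun ω => p * U ω]) * (q * V ω - μ[fun ω => q * V ω]))
      = fun ω => p * q * ((U ω - μ[U]) * (V ω - μ[V])) := by
    funext ω
    rw [integral_const_mul, integral_const_mul]
    ring
  rw [h, integral_const_mul]

lemma my_var_lin [IsProbabilityMeasure μ] {X Y : Ω → ℝ} (hX : MemLp X 2 μ) (hY : MemLp Y 2 μ)
    (p q : ℝ) :
    variance (fun ω => p * Y ω + q * X ω) μ
      = p ^ 2 * variance Y μ + 2 * (p * q) * covar μ X Y + q ^ 2 * variance X μ := by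
  rw [my_var_add (hY.const_mul p) (hX.const_mul q), my_covar_smul]
  have h1 : variance (fun ω => p * Y ω) μ = p ^ 2 * variance Y μ := by
    exact variance_smul p Y μ
  have h2 : variance (fun ω => q * X ω) μ = q ^ 2 * variance X μ := by
    exact variance_smul q X μ
  have h3 : covar μ Y X = covar μ X Y := by
    unfold covar; congr 1 with ω; ring
  rw [h1, h2, h3]
  ring

lemma my_sum_ite_f (f : ℕ → ℝ) {K N : ℕ} (h : K ≤ N) :
    ∑ j ∈ Finset.range N, (if j < K then f j else 0) = ∑ j ∈ Finset.range K, f j := by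
  rw [Finset.sum_congr rfl (fun j _ => by simp [Finset.mem_range] :
      ∀ j ∈ Finset.range N, (if j < K then f j else 0) = if j ∈ Finset.range K then f j else 0),
    Finset.sum_ite_mem, Finset.inter_eq_right.2 (Finset.range_subset_range.2 h)]

/-- master variance formula -/
lemma my_master
    {Ω : Type} [MeasurableSpace Ω] (μ : Measure Ω) [IsProbabilityMeasure μ]
    (W : ℕ → Ω → ℝ × ℝ)
    (hindep : iIndepFun W μ)
    (hident : ∀ j, IdentDistrib (W j) (W 0) μ μ)
    (hL2X : ∀ j, MemLp (fun ω => (W j ω).1) 2 μ)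
    (hL2Y : ∀ j, MemLp (fun ω => (W j ω).2) 2 μ)
    (K M N : ℕ) (hK : 1 ≤ K) (hKM : K ≤ M) (hMN : M ≤ N) (t : ℝ) :
    variance (fun ω => sampleMean K (fun j ω' => (W j ω').2) ω
        + t * (sampleMean N (fun j ω' => (W j ω').1) ω
          - sampleMean M (fun j ω' => (W j ω').1) ω)) μ
      = variance (fun ω => (W 0 ω).2) μ * (K:ℝ)⁻¹
        + 2 * t * covar μ (fun ω => (W 0 ω).1) (fun ω => (W 0 ω).2) * ((N:ℝ)⁻¹ - (M:ℝ)⁻¹)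
        + t ^ 2 * variance (fun ω => (W 0 ω).1) μ * ((M:ℝ)⁻¹ - (N:ℝ)⁻¹) := by
  have hKN : K ≤ N := hKM.trans hMN
  have hKne : (K:ℝ) ≠ 0 := Nat.cast_ne_zero.2 (by omega)
  have hMne : (M:ℝ) ≠ 0 := Nat.cast_ne_zero.2 (by omega)
  have hNne : (N:ℝ) ≠ 0 := Nat.cast_ne_zero.2 (by omega)
  set b : ℕ → ℝ := fun j => if j < K then (K:ℝ)⁻¹ else 0 with hb
  set w : ℕ → ℝ := fun j => (N:ℝ)⁻¹ - (if j < M then (M:ℝ)⁻¹ else 0) with hw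
  set vX := variance (fun ω => (W 0 ω).1) μ with hvX
  set vY := variance (fun ω => (W 0 ω).2) μ with hvY
  set C := covar μ (fun ω => (W 0 ω).1) (fun ω => (W 0 ω).2) with hC
  -- step 1: rewrite the estimator as a sum
  have hrep : (fun ω => sampleMean K (fun j ω' => (W j ω').2) ω
        + t * (sampleMean N (fun j ω' => (W j ω').1) ω
          - sampleMean M (fun j ω' => (W j ω').1) ω))
      = fun ω => ∑ j ∈ Finset.range N, (b j * (W j ω).2 + (t * w j) * (W j ω).1) := by
    funext ω
    rw [Finset.sum_add_distrib]
    have e1 : ∑ j ∈ Finset.range N, b j * (W j ω).2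
        = (K:ℝ)⁻¹ * ∑ j ∈ Finset.range K, (W j ω).2 := by
      rw [Finset.mul_sum, ← my_sum_ite_f (fun j => (K:ℝ)⁻¹ * (W j ω).2) hKN]
      exact Finset.sum_congr rfl fun j _ => by by_cases hj : j < K <;> simp [hb, hj]
    have e3 : ∑ j ∈ Finset.range N, w j * (W j ω).1
        = (N:ℝ)⁻¹ * ∑ j ∈ Finset.range N, (W j ω).1
          - (M:ℝ)⁻¹ * ∑ j ∈ Finset.range M, (W j ω).1 := by
      rw [Finset.mul_sum, Finset.mul_sum, ← my_sum_ite_f (fun j => (M:ℝ)⁻¹ * (W j ω).1) hMN,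
        ← Finset.sum_sub_distrib]
      refine Finset.sum_congr rfl fun j _ => ?_
      by_cases hj : j < M <;> simp [hw, hj] <;> ring
    have e2 : ∑ j ∈ Finset.range N, (t * w j) * (W j ω).1
        = t * ((N:ℝ)⁻¹ * ∑ j ∈ Finset.range N, (W j ω).1
          - (M:ℝ)⁻¹ * ∑ j ∈ Finset.range M, (W j ω).1) := by
      rw [← e3, Finset.mul_sum]
      exact Finset.sum_congr rfl fun j _ => by ring
    rw [e1, e2]
    rfl
  rw [hrep]
  -- step 2: variance of sum of independent terms
  have hg : ∀ j : ℕ, Measurable (fun p : ℝ × ℝ => b j * p.2 + (t * w j) * p.1) := by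
    intro j; fun_prop
  have hT : ∀ j, MemLp (fun ω => b j * (W j ω).2 + (t * w j) * (W j ω).1) 2 μ :=
    fun j => ((hL2Y j).const_mul _).add ((hL2X j).const_mul _)
  have hci : iIndepFun
      (fun j ω => b j * (W j ω).2 + (t * w j) * (W j ω).1) μ :=
    hindep.comp (fun j (p : ℝ × ℝ) => b j * p.2 + (t * w j) * p.1) hg
  have hvs : variance (fun ω => ∑ j ∈ Finset.range N, (b j * (W j ω).2 + (t * w j) * (W j ω).1)) μ
      = ∑ j ∈ Finset.range N,
          variance (fun ω => b j * (W j ω).2 + (t * w j) * (W j ω).1) μ := by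
    have := IndepFun.variance_sum (μ := μ)
      (X := fun j ω => b j * (W j ω).2 + (t * w j) * (W j ω).1) (s := Finset.range N)
      (fun i _ => hT i) (fun i _ j _ hij => hci.indepFun hij)
    rw [← this]
    congr 1
    funext ω
    simp
  rw [hvs]
  -- step 3: per-term variance via identical distribution
  have hterm : ∀ j, variance (fun ω => b j * (W j ω).2 + (t * w j) * (W j ω).1) μ
      = (b j) ^ 2 * vY + 2 * (b j * (t * w j)) * C + (t * w j) ^ 2 * vX := by
    intro j
    have hid : IdentDistrib (fun ω => b j * (W j ω).2 + (t * w j) * (W j ω).1)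
        (fun ω => b j * (W 0 ω).2 + (t * w j) * (W 0 ω).1) μ μ := (hident j).comp (hg j)
    rw [hid.variance_eq, my_var_lin (hL2X 0) (hL2Y 0)]
  rw [Finset.sum_congr rfl fun j _ => hterm j]
  -- step 4: the three coefficient sums
  have SB2 : ∑ j ∈ Finset.range N, (b j) ^ 2 = (K:ℝ)⁻¹ := by
    rw [Finset.sum_congr rfl (fun j _ => by by_cases hj : j < K <;> simp [hb, hj] :
        ∀ j ∈ Finset.range N, (b j) ^ 2 = if j < K then ((K:ℝ)⁻¹) ^ 2 else 0),
      my_sum_ite_f _ hKN, Finset.sum_const, Finset.card_range, nsmul_eq_mul]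
    field_simp
  have SBW : ∑ j ∈ Finset.range N, b j * w j = (N:ℝ)⁻¹ - (M:ℝ)⁻¹ := by
    rw [Finset.sum_congr rfl (fun j _ => ?_ :
        ∀ j ∈ Finset.range N, b j * w j
          = if j < K then (K:ℝ)⁻¹ * ((N:ℝ)⁻¹ - (M:ℝ)⁻¹) else 0),
      my_sum_ite_f _ hKN, Finset.sum_const, Finset.card_range, nsmul_eq_mul]
    · field_simp
    · by_cases hj : j < K
      · simp [hb, hw, hj, hj.trans_le hKM]
      · simp [hb, hj]
  have SW2 : ∑ j ∈ Finset.range N, (w j) ^ 2 = (M:ℝ)⁻¹ - (N:ℝ)⁻¹ := by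
    have hsplit : ∀ j ∈ Finset.range N, (w j) ^ 2
        = (if j < M then ((N:ℝ)⁻¹ - (M:ℝ)⁻¹) ^ 2 - ((N:ℝ)⁻¹) ^ 2 else 0) + ((N:ℝ)⁻¹) ^ 2 := by
      intro j _
      by_cases hj : j < M <;> simp [hw, hj] <;> ring
    rw [Finset.sum_congr rfl hsplit, Finset.sum_add_distrib, my_sum_ite_f _ hMN,
      Finset.sum_const, Finset.sum_const, Finset.card_range, Finset.card_range,
      nsmul_eq_mul, nsmul_eq_mul]
    field_simp
    ring
  -- step 5: assemble
  have hfinal : ∀ j ∈ Finset.range N,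
      (b j) ^ 2 * vY + 2 * (b j * (t * w j)) * C + (t * w j) ^ 2 * vX
        = vY * (b j) ^ 2 + (2 * t * C) * (b j * w j) + (t ^ 2 * vX) * (w j) ^ 2 := by
    intro j _; ring
  rw [Finset.sum_congr rfl hfinal, Finset.sum_add_distrib, Finset.sum_add_distrib,
    ← Finset.mul_sum, ← Finset.mul_sum, ← Finset.mul_sum, SB2, SBW, SW2]

end aux

/-- optimal control-variate coefficient.  For `1 ≤ K ≤ M ≤ N`, the
coefficient `a* = ρ σ_Y / σ_X` minimizes the variance of the two-level estimator:
for every `a ∈ ℝ`, `Var(Ȳ_K + a* (X̄_N − X̄_M)) ≤ Var(Ȳ_K + a (X̄_N − X̄_M))`. -/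
theorem stmt_6
    {Ω : Type} [MeasurableSpace Ω] (μ : Measure Ω) [IsProbabilityMeasure μ]
    (W : ℕ → Ω → ℝ × ℝ)
    (hmeas : ∀ j, Measurable (W j))
    (hindep : iIndepFun W μ)
    (hident : ∀ j, IdentDistrib (W j) (W 0) μ μ)
    (hL2X : ∀ j, MemLp (fun ω => (W j ω).1) 2 μ)
    (hL2Y : ∀ j, MemLp (fun ω => (W j ω).2) 2 μ)
    (σX σY c ρ : ℝ)
    (hσX : σX = Real.sqrt (variance (fun ω => (W 0 ω).1) μ)) (hσXpos : 0 < σX)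
    (hσY : σY = Real.sqrt (variance (fun ω => (W 0 ω).2) μ)) (hσYpos : 0 < σY)
    (hc : c = covar μ (fun ω => (W 0 ω).1) (fun ω => (W 0 ω).2))
    (hρ : ρ = c / (σX * σY))
    (K M N : ℕ) (hK : 1 ≤ K) (hKM : K ≤ M) (hMN : M ≤ N) (a : ℝ) :
    variance (fun ω => sampleMean K (fun j ω' => (W j ω').2) ω
        + (ρ * σY / σX) * (sampleMean N (fun j ω' => (W j ω').1) ω
          - sampleMean M (fun j ω' => (W j ω').1) ω)) μ
      ≤ variance (fun ω => sampleMean K (fun j ω' => (W j ω').2) ω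
        + a * (sampleMean N (fun j ω' => (W j ω').1) ω
          - sampleMean M (fun j ω' => (W j ω').1) ω)) μ := by
  rw [my_master μ W hindep hident hL2X hL2Y K M N hK hKM hMN (ρ * σY / σX),
    my_master μ W hindep hident hL2X hL2Y K M N hK hKM hMN a]
  have hX2 : variance (fun ω => (W 0 ω).1) μ = σX ^ 2 := by
    rw [hσX, Real.sq_sqrt (variance_nonneg _ _)]
  have hY2 : variance (fun ω => (W 0 ω).2) μ = σY ^ 2 := by
    rw [hσY, Real.sq_sqrt (variance_nonneg _ _)]
  have ha' : ρ * σY / σX = c / σX ^ 2 := by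
    rw [hρ]
    field_simp
  rw [hX2, hY2, ← hc, ha']
  have hs : (0:ℝ) < σX ^ 2 := pow_pos hσXpos 2
  have hB : (0:ℝ) ≤ (M:ℝ)⁻¹ - (N:ℝ)⁻¹ := by
    have hM0 : (0:ℝ) < (M:ℝ) := by
      have : 1 ≤ M := hK.trans hKM
      exact_mod_cast Nat.pos_of_ne_zero (by omega)
    have hMN' : (M:ℝ) ≤ (N:ℝ) := by exact_mod_cast hMN
    have := inv_anti₀ hM0 hMN'
    linarith
  have key : σY ^ 2 * (K:ℝ)⁻¹ + 2 * (c / σX ^ 2) * c * ((N:ℝ)⁻¹ - (M:ℝ)⁻¹)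
        + (c / σX ^ 2) ^ 2 * σX ^ 2 * ((M:ℝ)⁻¹ - (N:ℝ)⁻¹)
        + (((M:ℝ)⁻¹ - (N:ℝ)⁻¹) * (a * σX ^ 2 - c) ^ 2) / σX ^ 2
      = σY ^ 2 * (K:ℝ)⁻¹ + 2 * a * c * ((N:ℝ)⁻¹ - (M:ℝ)⁻¹)
        + a ^ 2 * σX ^ 2 * ((M:ℝ)⁻¹ - (N:ℝ)⁻¹) := by
    field_simp
    ring
  have hnn : 0 ≤ (((M:ℝ)⁻¹ - (N:ℝ)⁻¹) * (a * σX ^ 2 - c) ^ 2) / σX ^ 2 :=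
    div_nonneg (mul_nonneg hB (sq_nonneg _)) hs.le
  linarith [key]
end

section
/- General coupled MLMF variance formula: for any coefficients a_1, …, a_{L−1} ∈ ℝ, the MLMF estimator Y = P_L^{(N_L)} + Σ_{l=1}^{L−1} a_l (P_l^{(N_l)} − P_l^{(N_{l+1})}) satisfies Var(Y) = σ_L²/N_L + Σ_{l=1}^{L−1} (1/N_{l+1} − 1/N_l)(a_l² σ_l² − 2 a_l σ_l σ_L ρ_{l,L}). -/
open MeasureTheory ProbabilityTheory Finset

lemma mulInt {Ω : Type} [MeasurableSpace Ω] {μ : Measure Ω} {f g : Ω → ℝ}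
    (hf : MemLp f 2 μ) (hg : MemLp g 2 μ) : Integrable (fun ω => f ω * g ω) μ := by
  have h1 := (hf.add hg).integrable_sq
  have h2 := hf.integrable_sq
  have h3 := hg.integrable_sq
  have heq : (fun ω => f ω * g ω) = fun ω => (((f ω + g ω) ^ 2 - f ω ^ 2) - g ω ^ 2) / 2 := by
    funext ω; ring
  rw [heq]
  exact ((h1.sub h2).sub h3).div_const 2

lemma covar_comm {Ω : Type} [MeasurableSpace Ω] (μ : Measure Ω) (X Y : Ω → ℝ) :
    covar μ X Y = covar μ Y X := by
  unfold covar
  have : (fun ω => (X ω - μ[X]) * (Y ω - μ[Y])) = fun ω => (Y ω - μ[Y]) * (X ω - μ[X]) := by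
    funext ω; ring
  rw [this]

lemma covar_self {Ω : Type} [MeasurableSpace Ω] {μ : Measure Ω} [IsProbabilityMeasure μ]
    {X : Ω → ℝ} (hX : MemLp X 2 μ) : covar μ X X = variance X μ := by
  rw [variance_eq_integral hX.aestronglyMeasurable.aemeasurable]
  unfold covar
  congr 1
  funext ω
  simp [sq]

lemma memLp_lin {Ω ι : Type} [MeasurableSpace Ω] {μ : Measure Ω} (s : Finset ι) (c : ι → ℝ)
    (X : ι → Ω → ℝ) (hX : ∀ i ∈ s, MemLp (X i) 2 μ) :
    MemLp (fun ω => ∑ i ∈ s, c i * X i ω) 2 μ := by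
  have h := memLp_finset_sum' (μ := μ) s (fun i hi => ((hX i hi).const_mul (c i)))
  have heq : (∑ i ∈ s, fun ω => c i * X i ω) = (fun ω => ∑ i ∈ s, c i * X i ω) := by
    funext ω; simp
  rwa [heq] at h

lemma sum_ite_range {M n : ℕ} (h : n ≤ M) (g : ℕ → ℝ) :
    ∑ j ∈ Finset.range M, (if j < n then g j else 0) = ∑ j ∈ Finset.range n, g j := by
  rw [← Finset.sum_subset (Finset.range_subset_range.2 h)
      (fun j _ hj => if_neg (fun hlt => hj (Finset.mem_range.2 hlt)))]
  exact Finset.sum_congr rfl fun j hj => if_pos (Finset.mem_range.1 hj)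

lemma sum_I_mul {M n : ℕ} (h : n ≤ M) (f : ℕ → ℝ) :
    ∑ j ∈ Finset.range M, (if j < n then (n:ℝ)⁻¹ else 0) * f j
      = (n:ℝ)⁻¹ * ∑ j ∈ Finset.range n, f j := by
  calc ∑ j ∈ Finset.range M, (if j < n then (n:ℝ)⁻¹ else 0) * f j
      = ∑ j ∈ Finset.range M, (if j < n then (n:ℝ)⁻¹ * f j else 0) :=
        Finset.sum_congr rfl fun j _ => by split_ifs <;> simp
    _ = ∑ j ∈ Finset.range n, (n:ℝ)⁻¹ * f j := sum_ite_range h _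
    _ = (n:ℝ)⁻¹ * ∑ j ∈ Finset.range n, f j := (Finset.mul_sum _ _ _).symm

lemma sum_II {M n m : ℕ} (hm1 : 1 ≤ m) (hmn : m ≤ n) (hnM : n ≤ M) :
    ∑ j ∈ Finset.range M, (if j < n then (n:ℝ)⁻¹ else 0) * (if j < m then (m:ℝ)⁻¹ else 0)
      = (n:ℝ)⁻¹ := by
  have heq : ∀ j, (if j < n then (n:ℝ)⁻¹ else 0) * (if j < m then (m:ℝ)⁻¹ else 0)
      = (if j < m then (n:ℝ)⁻¹ * (m:ℝ)⁻¹ else 0) := by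
    intro j; by_cases h : j < m
    · rw [if_pos h, if_pos h, if_pos (lt_of_lt_of_le h hmn)]
    · rw [if_neg h, mul_zero, if_neg h]
  calc ∑ j ∈ Finset.range M, (if j < n then (n:ℝ)⁻¹ else 0) * (if j < m then (m:ℝ)⁻¹ else 0)
      = ∑ j ∈ Finset.range M, (if j < m then (n:ℝ)⁻¹ * (m:ℝ)⁻¹ else 0) :=
        Finset.sum_congr rfl fun j _ => heq j
    _ = ∑ j ∈ Finset.range m, (n:ℝ)⁻¹ * (m:ℝ)⁻¹ := sum_ite_range (le_trans hmn hnM) _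
    _ = (m : ℝ) * ((n:ℝ)⁻¹ * (m:ℝ)⁻¹) := by rw [Finset.sum_const, Finset.card_range, nsmul_eq_mul]
    _ = (n:ℝ)⁻¹ := by
        have hm0 : (m:ℝ) ≠ 0 := Nat.cast_ne_zero.mpr (by omega)
        rw [mul_comm ((n:ℝ)⁻¹), ← mul_assoc, mul_inv_cancel₀ hm0, one_mul]

lemma sum_II' {M n m : ℕ} (hm1 : 1 ≤ m) (hmn : m ≤ n) (hnM : n ≤ M) :
    ∑ j ∈ Finset.range M, (if j < m then (m:ℝ)⁻¹ else 0) * (if j < n then (n:ℝ)⁻¹ else 0)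
      = (n:ℝ)⁻¹ :=
  (Finset.sum_congr rfl fun j _ => mul_comm _ _).trans (sum_II hm1 hmn hnM)

lemma var_lin {Ω ι : Type} [MeasurableSpace Ω] (μ : Measure Ω) [IsProbabilityMeasure μ]
    (s : Finset ι) (c : ι → ℝ) (X : ι → Ω → ℝ)
    (hX : ∀ i ∈ s, MemLp (X i) 2 μ) :
    variance (fun ω => ∑ i ∈ s, c i * X i ω) μ
      = ∑ i ∈ s, ∑ i' ∈ s, c i * c i' * covar μ (X i) (X i') := by
  classical
  have hXi : ∀ i ∈ s, Integrable (X i) μ := fun i hi => (hX i hi).integrable one_le_two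
  have hV : ∀ i ∈ s, MemLp (fun ω => X i ω - μ[X i]) 2 μ :=
    fun i hi => (hX i hi).sub (memLp_const _)
  have hInt2 : ∀ i ∈ s, ∀ i' ∈ s, Integrable
      (fun ω => c i * c i' * ((X i ω - μ[X i]) * (X i' ω - μ[X i']))) μ :=
    fun i hi i' hi' => (mulInt (hV i hi) (hV i' hi')).const_mul _
  have hW := memLp_lin s c X hX
  have hmean : μ[fun ω => ∑ i ∈ s, c i * X i ω] = ∑ i ∈ s, c i * μ[X i] := by
    rw [integral_finset_sum s (fun i hi => (hXi i hi).const_mul (c i))]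
    exact Finset.sum_congr rfl fun i hi => integral_const_mul _ _
  rw [variance_eq_integral hW.aestronglyMeasurable.aemeasurable]
  change μ[(((fun ω => ∑ i ∈ s, c i * X i ω) - fun _ => μ[fun ω => ∑ i ∈ s, c i * X i ω]) ^ (2:ℕ) : Ω → ℝ)] = _
  have heq : ((fun ω => ∑ i ∈ s, c i * X i ω)
        - fun _ => μ[fun ω => ∑ i ∈ s, c i * X i ω]) ^ (2:ℕ)
      = fun ω => ∑ i ∈ s, ∑ i' ∈ s,
          c i * c i' * ((X i ω - μ[X i]) * (X i' ω - μ[X i'])) := by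
    funext ω
    simp only [Pi.pow_apply, Pi.sub_apply, hmean]
    rw [← Finset.sum_sub_distrib, sq, Finset.sum_mul_sum]
    exact Finset.sum_congr rfl fun i _ => Finset.sum_congr rfl fun i' _ => by ring
  rw [heq, integral_finset_sum s
    (fun i hi => integrable_finset_sum s (fun i' hi' => hInt2 i hi i' hi'))]
  refine Finset.sum_congr rfl fun i hi => ?_
  rw [integral_finset_sum s (fun i' hi' => hInt2 i hi i' hi')]
  refine Finset.sum_congr rfl fun i' hi' => ?_
  rw [integral_const_mul]
  rfl

/-- Coefficient of sample `j` at level `l` in the coupled MLMF estimator. -/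
noncomputable def coefB (L : ℕ) (N : ℕ → ℕ) (a : ℕ → ℝ) (l j : ℕ) : ℝ :=
  if l = L then (if j < N L then ((N L : ℕ) : ℝ)⁻¹ else 0)
  else a l * ((if j < N l then ((N l : ℕ) : ℝ)⁻¹ else 0)
    - (if j < N (l+1) then ((N (l+1) : ℕ) : ℝ)⁻¹ else 0))

lemma coefB_L (L : ℕ) (N : ℕ → ℕ) (a : ℕ → ℝ) (j : ℕ) :
    coefB L N a L j = (if j < N L then ((N L : ℕ) : ℝ)⁻¹ else 0) := if_pos rfl

lemma coefB_ne (L : ℕ) (N : ℕ → ℕ) (a : ℕ → ℝ) {l : ℕ} (j : ℕ) (h : l ≠ L) :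
    coefB L N a l j = a l * ((if j < N l then ((N l : ℕ) : ℝ)⁻¹ else 0)
      - (if j < N (l+1) then ((N (l+1) : ℕ) : ℝ)⁻¹ else 0)) := if_neg h

lemma triple_swap {f : ℕ → ℕ → ℕ → ℝ} (s t u : Finset ℕ) :
    ∑ j ∈ s, ∑ l ∈ t, ∑ l' ∈ u, f j l l' = ∑ l ∈ t, ∑ l' ∈ u, ∑ j ∈ s, f j l l' := by
  rw [Finset.sum_comm]
  exact Finset.sum_congr rfl fun l _ => Finset.sum_comm

/-- general coupled MLMF variance formula: for any coefficients
`a_1, …, a_{L−1} ∈ ℝ`, the coupled MLMF estimator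
`Y = P_L^{(N_L)} + Σ_{l=1}^{L−1} a_l (P_l^{(N_l)} − P_l^{(N_{l+1})})` satisfies
`Var(Y) = σ_L²/N_L + Σ_{l=1}^{L−1} (1/N_{l+1} − 1/N_l)(a_l² σ_l² − 2 a_l σ_l σ_L ρ_{l,L})`. -/
theorem stmt_7
    {Ω : Type} [MeasurableSpace Ω] (μ : Measure Ω) [IsProbabilityMeasure μ]
    (L : ℕ) (hL : 1 ≤ L)
    (Z : ℕ → Ω → ℕ → ℝ)
    (hmeas : ∀ j, Measurable (Z j))
    (hindep : iIndepFun Z μ)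
    (hident : ∀ j, IdentDistrib (Z j) (Z 0) μ μ)
    (hL2 : ∀ j, ∀ l ∈ Finset.Icc 1 L, MemLp (fun ω => Z j ω l) 2 μ)
    (σ ρ : ℕ → ℝ)
    (hσ : ∀ l ∈ Finset.Icc 1 L, σ l = Real.sqrt (variance (fun ω => Z 0 ω l) μ))
    (hσpos : ∀ l ∈ Finset.Icc 1 L, 0 < σ l)
    (hρ : ∀ l ∈ Finset.Icc 1 L,
      ρ l = covar μ (fun ω => Z 0 ω l) (fun ω => Z 0 ω L) / (σ l * σ L))
    (N : ℕ → ℕ)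
    (hNnest : ∀ l ∈ Finset.Icc 1 (L - 1), N (l + 1) ≤ N l)
    (hNLpos : 1 ≤ N L)
    (a : ℕ → ℝ) :
    variance (fun ω => sampleMean (N L) (fun j ω' => Z j ω' L) ω
        + ∑ l ∈ Finset.Icc 1 (L - 1),
            a l * (sampleMean (N l) (fun j ω' => Z j ω' l) ω
              - sampleMean (N (l + 1)) (fun j ω' => Z j ω' l) ω)) μ
      = (σ L) ^ 2 / N L
        + ∑ l ∈ Finset.Icc 1 (L - 1),
            ((N (l + 1) : ℝ)⁻¹ - (N l : ℝ)⁻¹)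
              * ((a l) ^ 2 * (σ l) ^ 2 - 2 * a l * σ l * σ L * ρ l) := by
  classical
  -- monotonicity facts about N
  have hchain : ∀ u d : ℕ, 1 ≤ u → u + d ≤ L → N (u + d) ≤ N u := by
    intro u d hu
    induction d with
    | zero => intro _; exact le_refl _
    | succ e ih =>
      intro hle
      have h1 : N (u + e + 1) ≤ N (u + e) :=
        hNnest (u + e) (Finset.mem_Icc.2 ⟨by omega, by omega⟩)
      exact le_trans h1 (ih (by omega))
  have hchain' : ∀ u v : ℕ, 1 ≤ u → u ≤ v → v ≤ L → N v ≤ N u := by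
    intro u v hu huv hvL
    have h := hchain u (v - u) hu (by omega)
    rwa [show u + (v - u) = v by omega] at h
  have hNpos : ∀ l, 1 ≤ l → l ≤ L → 1 ≤ N l :=
    fun l h1 h2 => le_trans hNLpos (hchain' l L h1 h2 le_rfl)
  have hNM : ∀ l, 1 ≤ l → l ≤ L → N l ≤ N 1 :=
    fun l h1 h2 => hchain' 1 l le_rfl h1 h2
  have hNLM : N L ≤ N 1 := hNM L hL le_rfl
  have hLmem : L ∈ Finset.Icc 1 L := Finset.mem_Icc.mpr ⟨hL, le_rfl⟩
  have hmemL : ∀ l ∈ Finset.Icc 1 (L-1), l ∈ Finset.Icc 1 L := by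
    intro l hl; rw [Finset.mem_Icc] at *; omega
  have hsplit : Finset.Icc 1 L = insert L (Finset.Icc 1 (L-1)) := by
    ext x; simp only [Finset.mem_Icc, Finset.mem_insert]; omega
  have hLnot : L ∉ Finset.Icc 1 (L-1) := by simp only [Finset.mem_Icc]; omega
  -- measurability of the linear maps
  have hg : ∀ j : ℕ, Measurable (fun x : ℕ → ℝ => ∑ l ∈ Finset.Icc 1 L, coefB L N a l j * x l) :=
    fun j => Finset.measurable_sum _ (fun l _ => (measurable_pi_apply l).const_mul _)
  -- Step 1: rewrite the estimator as a sum over samples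
  have hY : ∀ ω : Ω, (∑ j ∈ Finset.range (N 1), ∑ l ∈ Finset.Icc 1 L, coefB L N a l j * Z j ω l)
      = sampleMean (N L) (fun j ω' => Z j ω' L) ω
        + ∑ l ∈ Finset.Icc 1 (L-1),
            a l * (sampleMean (N l) (fun j ω' => Z j ω' l) ω
              - sampleMean (N (l+1)) (fun j ω' => Z j ω' l) ω) := by
    intro ω
    rw [Finset.sum_comm, hsplit, Finset.sum_insert hLnot]
    congr 1
    · simp only [coefB_L]
      rw [sum_I_mul hNLM]
      rfl
    · refine Finset.sum_congr rfl fun l hl => ?_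
      obtain ⟨hl1, hl2⟩ := Finset.mem_Icc.mp hl
      have hlneL : l ≠ L := by omega
      have h1 : N l ≤ N 1 := hNM l hl1 (by omega)
      have h2 : N (l+1) ≤ N 1 := hNM (l+1) (by omega) (by omega)
      calc ∑ j ∈ Finset.range (N 1), coefB L N a l j * Z j ω l
          = ∑ j ∈ Finset.range (N 1),
              (a l * ((if j < N l then ((N l : ℕ) : ℝ)⁻¹ else 0) * Z j ω l)
                - a l * ((if j < N (l+1) then ((N (l+1) : ℕ) : ℝ)⁻¹ else 0) * Z j ω l)) :=
            Finset.sum_congr rfl fun j _ => by rw [coefB_ne _ _ _ _ hlneL]; ring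
        _ = a l * ((N l : ℝ)⁻¹ * ∑ j ∈ Finset.range (N l), Z j ω l)
            - a l * ((N (l+1) : ℝ)⁻¹ * ∑ j ∈ Finset.range (N (l+1)), Z j ω l) := by
            rw [Finset.sum_sub_distrib, ← Finset.mul_sum, ← Finset.mul_sum,
              sum_I_mul h1, sum_I_mul h2]
        _ = a l * (sampleMean (N l) (fun j ω' => Z j ω' l) ω
            - sampleMean (N (l+1)) (fun j ω' => Z j ω' l) ω) := by
            rw [← mul_sub]; rfl
  have hfun : (fun ω => sampleMean (N L) (fun j ω' => Z j ω' L) ω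
        + ∑ l ∈ Finset.Icc 1 (L - 1),
            a l * (sampleMean (N l) (fun j ω' => Z j ω' l) ω
              - sampleMean (N (l + 1)) (fun j ω' => Z j ω' l) ω))
      = (∑ j ∈ Finset.range (N 1), fun ω => ∑ l ∈ Finset.Icc 1 L, coefB L N a l j * Z j ω l) := by
    funext ω
    simp only [Finset.sum_apply]
    exact (hY ω).symm
  rw [hfun]
  -- Step 2: variance of the sum of independent terms
  have hWmem : ∀ j, MemLp (fun ω => ∑ l ∈ Finset.Icc 1 L, coefB L N a l j * Z j ω l) 2 μ :=
    fun j => memLp_lin _ _ _ (fun l hl => hL2 j l hl)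
  have hpair : Set.Pairwise ↑(Finset.range (N 1)) (fun i i' =>
      IndepFun (fun ω => ∑ l ∈ Finset.Icc 1 L, coefB L N a l i * Z i ω l)
        (fun ω => ∑ l ∈ Finset.Icc 1 L, coefB L N a l i' * Z i' ω l) μ) := by
    intro i _ i' _ hii'
    exact (hindep.indepFun hii').comp (hg i) (hg i')
  rw [IndepFun.variance_sum (fun j _ => hWmem j) hpair]
  -- Step 3: variance of each term via identical distribution
  have hvarW : ∀ j, variance (fun ω => ∑ l ∈ Finset.Icc 1 L, coefB L N a l j * Z j ω l) μ
      = ∑ l ∈ Finset.Icc 1 L, ∑ l' ∈ Finset.Icc 1 L, coefB L N a l j * coefB L N a l' j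
          * covar μ (fun ω => Z 0 ω l) (fun ω => Z 0 ω l') := by
    intro j
    have hid : IdentDistrib (fun ω => ∑ l ∈ Finset.Icc 1 L, coefB L N a l j * Z j ω l)
        (fun ω => ∑ l ∈ Finset.Icc 1 L, coefB L N a l j * Z 0 ω l) μ μ :=
      (hident j).comp (hg j)
    rw [hid.variance_eq]
    exact var_lin μ _ _ _ (fun l hl => hL2 0 l hl)
  simp only [hvarW]
  rw [triple_swap]
  have hfact : ∀ l ∈ Finset.Icc 1 L, ∀ l' ∈ Finset.Icc 1 L,
      (∑ j ∈ Finset.range (N 1), coefB L N a l j * coefB L N a l' j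
        * covar μ (fun ω => Z 0 ω l) (fun ω => Z 0 ω l'))
      = (∑ j ∈ Finset.range (N 1), coefB L N a l j * coefB L N a l' j)
        * covar μ (fun ω => Z 0 ω l) (fun ω => Z 0 ω l') := by
    intro l _ l' _
    rw [← Finset.sum_mul]
  rw [Finset.sum_congr rfl (fun l hl => Finset.sum_congr rfl (fun l' hl' => hfact l hl l' hl'))]
  -- Step 4: S computations
  have hSsym : ∀ l l', (∑ j ∈ Finset.range (N 1), coefB L N a l' j * coefB L N a l j)
      = ∑ j ∈ Finset.range (N 1), coefB L N a l j * coefB L N a l' j :=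
    fun l l' => Finset.sum_congr rfl fun j _ => mul_comm _ _
  have hSLL : (∑ j ∈ Finset.range (N 1), coefB L N a L j * coefB L N a L j)
      = ((N L : ℕ) : ℝ)⁻¹ := by
    simp only [coefB_L]
    exact sum_II hNLpos le_rfl hNLM
  have hSlL : ∀ l ∈ Finset.Icc 1 (L-1),
      (∑ j ∈ Finset.range (N 1), coefB L N a l j * coefB L N a L j)
      = a l * (((N l : ℕ) : ℝ)⁻¹ - ((N (l+1) : ℕ) : ℝ)⁻¹) := by
    intro l hl
    obtain ⟨hl1, hl2⟩ := Finset.mem_Icc.mp hl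
    have hlne : l ≠ L := by omega
    have hNl1 : N (l+1) ≤ N l := hNnest l hl
    have hNLl1 : N L ≤ N (l+1) := hchain' (l+1) L (by omega) (by omega) le_rfl
    have hNlM : N l ≤ N 1 := hNM l hl1 (by omega)
    have hNl1M : N (l+1) ≤ N 1 := le_trans hNl1 hNlM
    calc ∑ j ∈ Finset.range (N 1), coefB L N a l j * coefB L N a L j
        = ∑ j ∈ Finset.range (N 1),
            (a l * ((if j < N l then ((N l : ℕ) : ℝ)⁻¹ else 0)
                * (if j < N L then ((N L : ℕ) : ℝ)⁻¹ else 0))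
              - a l * ((if j < N (l+1) then ((N (l+1) : ℕ) : ℝ)⁻¹ else 0)
                * (if j < N L then ((N L : ℕ) : ℝ)⁻¹ else 0))) :=
          Finset.sum_congr rfl fun j _ => by rw [coefB_ne _ _ _ _ hlne, coefB_L]; ring
      _ = a l * ((N l : ℝ)⁻¹) - a l * ((N (l+1) : ℝ)⁻¹) := by
          rw [Finset.sum_sub_distrib, ← Finset.mul_sum, ← Finset.mul_sum,
            sum_II hNLpos (le_trans hNLl1 hNl1) hNlM, sum_II hNLpos hNLl1 hNl1M]
      _ = a l * (((N l : ℕ) : ℝ)⁻¹ - ((N (l+1) : ℕ) : ℝ)⁻¹) := by ring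
  have hSll : ∀ l ∈ Finset.Icc 1 (L-1),
      (∑ j ∈ Finset.range (N 1), coefB L N a l j * coefB L N a l j)
      = a l ^ 2 * (((N (l+1) : ℕ) : ℝ)⁻¹ - ((N l : ℕ) : ℝ)⁻¹) := by
    intro l hl
    obtain ⟨hl1, hl2⟩ := Finset.mem_Icc.mp hl
    have hlne : l ≠ L := by omega
    have hNl1 : N (l+1) ≤ N l := hNnest l hl
    have hp1 : 1 ≤ N (l+1) := hNpos (l+1) (by omega) (by omega)
    have hp0 : 1 ≤ N l := le_trans hp1 hNl1
    have hNlM : N l ≤ N 1 := hNM l hl1 (by omega)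
    have hNl1M : N (l+1) ≤ N 1 := le_trans hNl1 hNlM
    calc ∑ j ∈ Finset.range (N 1), coefB L N a l j * coefB L N a l j
        = ∑ j ∈ Finset.range (N 1),
            ((a l * a l) * ((if j < N l then ((N l : ℕ) : ℝ)⁻¹ else 0)
                * (if j < N l then ((N l : ℕ) : ℝ)⁻¹ else 0))
              - (a l * a l) * ((if j < N l then ((N l : ℕ) : ℝ)⁻¹ else 0)
                * (if j < N (l+1) then ((N (l+1) : ℕ) : ℝ)⁻¹ else 0))
              - (a l * a l) * ((if j < N (l+1) then ((N (l+1) : ℕ) : ℝ)⁻¹ else 0)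
                * (if j < N l then ((N l : ℕ) : ℝ)⁻¹ else 0))
              + (a l * a l) * ((if j < N (l+1) then ((N (l+1) : ℕ) : ℝ)⁻¹ else 0)
                * (if j < N (l+1) then ((N (l+1) : ℕ) : ℝ)⁻¹ else 0))) :=
          Finset.sum_congr rfl fun j _ => by rw [coefB_ne _ _ _ _ hlne]; ring
      _ = (a l * a l) * ((N l : ℝ)⁻¹) - (a l * a l) * ((N l : ℝ)⁻¹)
          - (a l * a l) * ((N l : ℝ)⁻¹) + (a l * a l) * ((N (l+1) : ℝ)⁻¹) := by
          rw [Finset.sum_add_distrib, Finset.sum_sub_distrib, Finset.sum_sub_distrib,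
            ← Finset.mul_sum, ← Finset.mul_sum, ← Finset.mul_sum, ← Finset.mul_sum,
            sum_II hp0 le_rfl hNlM, sum_II hp1 hNl1 hNlM, sum_II' hp1 hNl1 hNlM,
            sum_II hp1 le_rfl hNl1M]
      _ = a l ^ 2 * (((N (l+1) : ℕ) : ℝ)⁻¹ - ((N l : ℕ) : ℝ)⁻¹) := by ring
  have hS0 : ∀ l ∈ Finset.Icc 1 (L-1), ∀ l' ∈ Finset.Icc 1 (L-1), l < l' →
      (∑ j ∈ Finset.range (N 1), coefB L N a l j * coefB L N a l' j) = 0 := by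
    intro l hl l' hl' hlt
    obtain ⟨hl1, hl2⟩ := Finset.mem_Icc.mp hl
    obtain ⟨hl'1, hl'2⟩ := Finset.mem_Icc.mp hl'
    have hlne : l ≠ L := by omega
    have hl'ne : l' ≠ L := by omega
    have hNl1 : N (l+1) ≤ N l := hNnest l hl
    have hNl'1 : N (l'+1) ≤ N l' := hNnest l' hl'
    have hNl'l1 : N l' ≤ N (l+1) := hchain' (l+1) l' (by omega) (by omega) (by omega)
    have hp1 : 1 ≤ N (l'+1) := hNpos (l'+1) (by omega) (by omega)
    have hp0 : 1 ≤ N l' := le_trans hp1 hNl'1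
    have hNlM : N l ≤ N 1 := hNM l hl1 (by omega)
    have hNl1M : N (l+1) ≤ N 1 := le_trans hNl1 hNlM
    calc ∑ j ∈ Finset.range (N 1), coefB L N a l j * coefB L N a l' j
        = ∑ j ∈ Finset.range (N 1),
            ((a l * a l') * ((if j < N l then ((N l : ℕ) : ℝ)⁻¹ else 0)
                * (if j < N l' then ((N l' : ℕ) : ℝ)⁻¹ else 0))
              - (a l * a l') * ((if j < N l then ((N l : ℕ) : ℝ)⁻¹ else 0)
                * (if j < N (l'+1) then ((N (l'+1) : ℕ) : ℝ)⁻¹ else 0))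
              - (a l * a l') * ((if j < N (l+1) then ((N (l+1) : ℕ) : ℝ)⁻¹ else 0)
                * (if j < N l' then ((N l' : ℕ) : ℝ)⁻¹ else 0))
              + (a l * a l') * ((if j < N (l+1) then ((N (l+1) : ℕ) : ℝ)⁻¹ else 0)
                * (if j < N (l'+1) then ((N (l'+1) : ℕ) : ℝ)⁻¹ else 0))) :=
          Finset.sum_congr rfl fun j _ => by
            rw [coefB_ne _ _ _ _ hlne, coefB_ne _ _ _ _ hl'ne]; ring
      _ = (a l * a l') * ((N l : ℝ)⁻¹) - (a l * a l') * ((N l : ℝ)⁻¹)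
          - (a l * a l') * ((N (l+1) : ℝ)⁻¹) + (a l * a l') * ((N (l+1) : ℝ)⁻¹) := by
          rw [Finset.sum_add_distrib, Finset.sum_sub_distrib, Finset.sum_sub_distrib,
            ← Finset.mul_sum, ← Finset.mul_sum, ← Finset.mul_sum, ← Finset.mul_sum,
            sum_II hp0 (le_trans hNl'l1 hNl1) hNlM,
            sum_II hp1 (le_trans (le_trans hNl'1 hNl'l1) hNl1) hNlM,
            sum_II hp0 hNl'l1 hNl1M,
            sum_II hp1 (le_trans hNl'1 hNl'l1) hNl1M]
      _ = 0 := by ring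
  have hS0' : ∀ l ∈ Finset.Icc 1 (L-1), ∀ l' ∈ Finset.Icc 1 (L-1), l ≠ l' →
      (∑ j ∈ Finset.range (N 1), coefB L N a l j * coefB L N a l' j) = 0 := by
    intro l hl l' hl' hne
    rcases lt_or_gt_of_ne hne with h | h
    · exact hS0 l hl l' hl' h
    · rw [← hSsym]; exact hS0 l' hl' l hl h
  -- C computations
  have hCll : ∀ l ∈ Finset.Icc 1 L,
      covar μ (fun ω => Z 0 ω l) (fun ω => Z 0 ω l) = σ l ^ 2 := by
    intro l hl
    rw [covar_self (hL2 0 l hl), hσ l hl, Real.sq_sqrt (variance_nonneg _ _)]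
  have hClL : ∀ l ∈ Finset.Icc 1 L,
      covar μ (fun ω => Z 0 ω l) (fun ω => Z 0 ω L) = σ l * σ L * ρ l := by
    intro l hl
    have h1 := (hσpos l hl).ne'
    have h2 := (hσpos L hLmem).ne'
    rw [hρ l hl]
    field_simp
  -- Step 5: final assembly
  rw [hsplit]
  simp only [Finset.sum_insert hLnot]
  have hA : ∑ l' ∈ Finset.Icc 1 (L-1),
      (∑ j ∈ Finset.range (N 1), coefB L N a L j * coefB L N a l' j)
        * covar μ (fun ω => Z 0 ω L) (fun ω => Z 0 ω l')
      = ∑ l ∈ Finset.Icc 1 (L-1),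
          (a l * (((N l : ℕ) : ℝ)⁻¹ - ((N (l+1) : ℕ) : ℝ)⁻¹)) * (σ l * σ L * ρ l) := by
    refine Finset.sum_congr rfl fun l' hl' => ?_
    rw [← hSsym, hSlL l' hl', covar_comm, hClL l' (hmemL l' hl')]
  have hB : ∑ l ∈ Finset.Icc 1 (L-1),
      ((∑ j ∈ Finset.range (N 1), coefB L N a l j * coefB L N a L j)
          * covar μ (fun ω => Z 0 ω l) (fun ω => Z 0 ω L)
        + ∑ l' ∈ Finset.Icc 1 (L-1),
            (∑ j ∈ Finset.range (N 1), coefB L N a l j * coefB L N a l' j)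
              * covar μ (fun ω => Z 0 ω l) (fun ω => Z 0 ω l'))
      = ∑ l ∈ Finset.Icc 1 (L-1),
          ((a l * (((N l : ℕ) : ℝ)⁻¹ - ((N (l+1) : ℕ) : ℝ)⁻¹)) * (σ l * σ L * ρ l)
            + a l ^ 2 * (((N (l+1) : ℕ) : ℝ)⁻¹ - ((N l : ℕ) : ℝ)⁻¹) * σ l ^ 2) := by
    refine Finset.sum_congr rfl fun l hl => ?_
    have hinner : ∑ l' ∈ Finset.Icc 1 (L-1),
        (∑ j ∈ Finset.range (N 1), coefB L N a l j * coefB L N a l' j)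
          * covar μ (fun ω => Z 0 ω l) (fun ω => Z 0 ω l')
        = a l ^ 2 * (((N (l+1) : ℕ) : ℝ)⁻¹ - ((N l : ℕ) : ℝ)⁻¹) * σ l ^ 2 := by
      rw [Finset.sum_eq_single_of_mem l hl
        (fun l' hl' hne => by rw [hS0' l hl l' hl' (Ne.symm hne), zero_mul])]
      rw [hSll l hl, hCll l (hmemL l hl)]
    rw [hinner, hSlL l hl, hClL l (hmemL l hl)]
  rw [hSLL, hCll L hLmem, hA, hB, add_assoc, ← Finset.sum_add_distrib]
  congr 1
  · exact inv_mul_eq_div _ _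
  · exact Finset.sum_congr rfl fun l hl => by ring
end

section
/- Uncorrelatedness of level-difference terms: for 1 ≤ l < m ≤ L−1, Cov(P_l^{(N_l)} − P_l^{(N_{l+1})}, P_m^{(N_m)} − P_m^{(N_{m+1})}) = 0. -/
open MeasureTheory ProbabilityTheory Finset

lemma l2_mul_integrable {Ω : Type} [MeasurableSpace Ω] {μ : Measure Ω} [IsProbabilityMeasure μ]
    {f g : Ω → ℝ} (hf : MemLp f 2 μ) (hg : MemLp g 2 μ) :
    Integrable (fun ω => f ω * g ω) μ := by
  have h : (fun ω => f ω * g ω) = fun ω => ((f ω + g ω)^2 - f ω^2 - g ω^2)/2 := by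
    funext ω; ring
  rw [h]
  exact (((hf.add hg).integrable_sq.sub hf.integrable_sq).sub hg.integrable_sq).div_const 2

lemma sum_if_lt (K n : ℕ) (hn : n ≤ K) (F : ℕ → ℝ) :
    ∑ j ∈ Finset.range K, (if j < n then F j else 0) = ∑ j ∈ Finset.range n, F j := by
  rw [← Finset.sum_subset (Finset.range_subset_range.2 hn)
    (fun j _ hj => by rw [if_neg (by simpa using hj)])]
  exact Finset.sum_congr rfl fun j hj => if_pos (Finset.mem_range.1 hj)

/-- uncorrelatedness of level-difference terms: for `1 ≤ l < m ≤ L−1`,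
`Cov(P_l^{(N_l)} − P_l^{(N_{l+1})}, P_m^{(N_m)} − P_m^{(N_{m+1})}) = 0`. -/
theorem stmt_10
    {Ω : Type} [MeasurableSpace Ω] (μ : Measure Ω) [IsProbabilityMeasure μ]
    (L : ℕ) (hL : 1 ≤ L)
    (Z : ℕ → Ω → ℕ → ℝ)
    (hmeas : ∀ j, Measurable (Z j))
    (hindep : iIndepFun Z μ)
    (hident : ∀ j, IdentDistrib (Z j) (Z 0) μ μ)
    (hL2 : ∀ j, ∀ l ∈ Finset.Icc 1 L, MemLp (fun ω => Z j ω l) 2 μ)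
    (N : ℕ → ℕ)
    (hNnest : ∀ l ∈ Finset.Icc 1 (L - 1), N (l + 1) ≤ N l)
    (hNLpos : 1 ≤ N L)
    (l m : ℕ) (hl : 1 ≤ l) (hlm : l < m) (hm : m ≤ L - 1) :
    covar μ
        (fun ω => sampleMean (N l) (fun j ω' => Z j ω' l) ω
          - sampleMean (N (l + 1)) (fun j ω' => Z j ω' l) ω)
        (fun ω => sampleMean (N m) (fun j ω' => Z j ω' m) ω
          - sampleMean (N (m + 1)) (fun j ω' => Z j ω' m) ω)
      = 0 := by
  -- index arithmetic
  have hanti : ∀ i i', 1 ≤ i → i ≤ i' → i' ≤ L → N i' ≤ N i := by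
    intro i i' h1 h2 h3
    induction i' with
    | zero => omega
    | succ k ih =>
      rcases Nat.eq_or_lt_of_le h2 with h | h
      · rw [h]
      · have hk : i ≤ k := by omega
        have hstep : N (k + 1) ≤ N k :=
          hNnest k (by simp only [Finset.mem_Icc]; omega)
        exact hstep.trans (ih hk (by omega))
  have hmL : m + 1 ≤ L := by omega
  have hml : N m ≤ N (l + 1) := hanti (l + 1) m (by omega) (by omega) (by omega)
  have hll : N (l + 1) ≤ N l := hanti l (l + 1) hl (by omega) (by omega)
  have hmm : N (m + 1) ≤ N m := hanti m (m + 1) (by omega) (by omega) hmL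
  have hNm1pos : 0 < N (m + 1) := lt_of_lt_of_le hNLpos (hanti (m + 1) L (by omega) hmL le_rfl)
  have hNmpos : 0 < N m := lt_of_lt_of_le hNm1pos hmm
  have hlmem : l ∈ Finset.Icc 1 L := by simp only [Finset.mem_Icc]; omega
  have hmmem : m ∈ Finset.Icc 1 L := by simp only [Finset.mem_Icc]; omega
  set K := N l with hK
  set a : ℕ → ℝ := fun j =>
    (if j < N l then ((N l : ℝ))⁻¹ else 0) - (if j < N (l + 1) then ((N (l + 1) : ℝ))⁻¹ else 0)
    with ha
  set b : ℕ → ℝ := fun j =>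
    (if j < N m then ((N m : ℝ))⁻¹ else 0) - (if j < N (m + 1) then ((N (m + 1) : ℝ))⁻¹ else 0)
    with hb
  -- rewrite differences of sample means as single weighted sums
  have hXdef : (fun ω => sampleMean (N l) (fun j ω' => Z j ω' l) ω
      - sampleMean (N (l + 1)) (fun j ω' => Z j ω' l) ω)
      = fun ω => ∑ j ∈ Finset.range K, a j * Z j ω l := by
    funext ω
    simp only [ha, sub_mul, Finset.sum_sub_distrib, ite_mul, zero_mul]
    rw [sum_if_lt K (N l) le_rfl (fun j => (N l : ℝ)⁻¹ * Z j ω l),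
      sum_if_lt K (N (l + 1)) hll (fun j => (N (l + 1) : ℝ)⁻¹ * Z j ω l)]
    simp only [sampleMean, Finset.mul_sum]
  have hYdef : (fun ω => sampleMean (N m) (fun j ω' => Z j ω' m) ω
      - sampleMean (N (m + 1)) (fun j ω' => Z j ω' m) ω)
      = fun ω => ∑ j ∈ Finset.range K, b j * Z j ω m := by
    funext ω
    simp only [hb, sub_mul, Finset.sum_sub_distrib, ite_mul, zero_mul]
    rw [sum_if_lt K (N m) (hml.trans hll) (fun j => (N m : ℝ)⁻¹ * Z j ω m),
      sum_if_lt K (N (m + 1)) ((hmm.trans hml).trans hll)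
        (fun j => (N (m + 1) : ℝ)⁻¹ * Z j ω m)]
    simp only [sampleMean, Finset.mul_sum]
  rw [hXdef, hYdef]
  -- expectations
  set el : ℝ := μ[fun ω => Z 0 ω l] with hel
  set em : ℝ := μ[fun ω => Z 0 ω m] with hem
  have hEl : ∀ j, μ[fun ω => Z j ω l] = el := fun j =>
    ((hident j).comp (measurable_pi_apply l)).integral_eq
  have hEm : ∀ j, μ[fun ω => Z j ω m] = em := fun j =>
    ((hident j).comp (measurable_pi_apply m)).integral_eq
  have hintl : ∀ j, Integrable (fun ω => Z j ω l) μ := fun j =>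
    (hL2 j l hlmem).integrable one_le_two
  have hintm : ∀ j, Integrable (fun ω => Z j ω m) μ := fun j =>
    (hL2 j m hmmem).integrable one_le_two
  have hcl : ∀ j, MemLp (fun ω => Z j ω l - el) 2 μ := fun j =>
    (hL2 j l hlmem).sub (memLp_const el)
  have hcm : ∀ j, MemLp (fun ω => Z j ω m - em) 2 μ := fun j =>
    (hL2 j m hmmem).sub (memLp_const em)
  set v : ℝ := ∫ ω, (Z 0 ω l - el) * (Z 0 ω m - em) ∂μ with hv
  -- covariance of individual pairs
  have hpair : ∀ j k, (∫ ω, (Z j ω l - el) * (Z k ω m - em) ∂μ)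
      = if j = k then v else 0 := by
    intro j k
    by_cases h : j = k
    · subst h
      rw [if_pos rfl, hv]
      have hψ : Measurable (fun w : ℕ → ℝ => (w l - el) * (w m - em)) :=
        ((measurable_pi_apply l).sub measurable_const).mul
          ((measurable_pi_apply m).sub measurable_const)
      exact ((hident j).comp hψ).integral_eq
    · rw [if_neg h]
      have hind : IndepFun (fun ω => Z j ω l - el) (fun ω => Z k ω m - em) μ :=
        (hindep.indepFun h).comp ((measurable_pi_apply l).sub measurable_const)
          ((measurable_pi_apply m).sub measurable_const)
      have h1 : Integrable (fun ω => Z j ω l - el) μ := (hintl j).sub (integrable_const el)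
      have h2 : Integrable (fun ω => Z k ω m - em) μ := (hintm k).sub (integrable_const em)
      have hmul := hind.integral_mul_eq_mul_integral h1.aestronglyMeasurable h2.aestronglyMeasurable
      have hfg : (fun ω => (Z j ω l - el) * (Z k ω m - em))
          = (fun ω => Z j ω l - el) * fun ω => Z k ω m - em := rfl
      rw [show (∫ ω, (Z j ω l - el) * (Z k ω m - em) ∂μ)
          = integral μ ((fun ω => Z j ω l - el) * fun ω => Z k ω m - em) from by rw [← hfg],
        hmul]
      have : (∫ ω, (Z j ω l - el) ∂μ) = 0 := by
        rw [integral_sub (hintl j) (integrable_const el), integral_const, hEl j]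
        simp
      rw [this, zero_mul]
  -- expectations of the weighted sums
  have hEX : μ[fun ω => ∑ j ∈ Finset.range K, a j * Z j ω l]
      = ∑ j ∈ Finset.range K, a j * el := by
    rw [integral_finset_sum _ (fun j _ => (hintl j).const_mul (a j))]
    exact Finset.sum_congr rfl fun j _ => by rw [integral_const_mul, hEl j]
  have hEY : μ[fun ω => ∑ j ∈ Finset.range K, b j * Z j ω m]
      = ∑ j ∈ Finset.range K, b j * em := by
    rw [integral_finset_sum _ (fun j _ => (hintm j).const_mul (b j))]
    exact Finset.sum_congr rfl fun j _ => by rw [integral_const_mul, hEm j]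
  -- rewrite the covariance integrand as a double sum of centered products
  have hintegrand : ∀ ω,
      ((∑ j ∈ Finset.range K, a j * Z j ω l) - μ[fun ω => ∑ j ∈ Finset.range K, a j * Z j ω l])
      * ((∑ j ∈ Finset.range K, b j * Z j ω m) - μ[fun ω => ∑ j ∈ Finset.range K, b j * Z j ω m])
      = ∑ j ∈ Finset.range K, ∑ k ∈ Finset.range K,
          (a j * b k) * ((Z j ω l - el) * (Z k ω m - em)) := by
    intro ω
    rw [hEX, hEY, ← Finset.sum_sub_distrib, ← Finset.sum_sub_distrib]
    rw [Finset.sum_mul_sum]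
    exact Finset.sum_congr rfl fun j _ => Finset.sum_congr rfl fun k _ => by ring
  have hterm_int : ∀ j k, Integrable
      (fun ω => (a j * b k) * ((Z j ω l - el) * (Z k ω m - em))) μ := fun j k =>
    (l2_mul_integrable (hcl j) (hcm k)).const_mul (a j * b k)
  rw [covar]
  calc (∫ ω, ((∑ j ∈ Finset.range K, a j * Z j ω l)
          - μ[fun ω => ∑ j ∈ Finset.range K, a j * Z j ω l])
        * ((∑ j ∈ Finset.range K, b j * Z j ω m)
          - μ[fun ω => ∑ j ∈ Finset.range K, b j * Z j ω m]) ∂μ)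
      = ∫ ω, ∑ j ∈ Finset.range K, ∑ k ∈ Finset.range K,
          (a j * b k) * ((Z j ω l - el) * (Z k ω m - em)) ∂μ := by
        exact integral_congr_ae (Filter.Eventually.of_forall hintegrand)
    _ = ∑ j ∈ Finset.range K, ∑ k ∈ Finset.range K,
          ∫ ω, (a j * b k) * ((Z j ω l - el) * (Z k ω m - em)) ∂μ := by
        rw [integral_finset_sum _ (fun j _ => integrable_finset_sum _ (fun k _ => hterm_int j k))]
        exact Finset.sum_congr rfl fun j _ =>
          integral_finset_sum _ (fun k _ => hterm_int j k)
    _ = ∑ j ∈ Finset.range K, ∑ k ∈ Finset.range K,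
          (a j * b k) * (if j = k then v else 0) := by
        exact Finset.sum_congr rfl fun j _ => Finset.sum_congr rfl fun k _ => by
          rw [integral_const_mul, hpair j k]
    _ = ∑ j ∈ Finset.range K, (a j * b j) * v := by
        refine Finset.sum_congr rfl fun j hj => ?_
        rw [Finset.sum_congr rfl (fun k _ => mul_ite (j = k) (a j * b k) v 0)]
        simp only [mul_zero]
        rw [Finset.sum_ite_eq (Finset.range K) j (fun k => a j * b k * v), if_pos hj]
    _ = (∑ j ∈ Finset.range K, a j * b j) * v := by rw [Finset.sum_mul]
    _ = 0 := by
        have hab : ∑ j ∈ Finset.range K, a j * b j = 0 := by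
          have hstep : ∀ j ∈ Finset.range K, a j * b j
              = if j < N m then (((N l : ℝ))⁻¹ - ((N (l + 1) : ℝ))⁻¹) * b j else 0 := by
            intro j _
            by_cases hj : j < N m
            · rw [if_pos hj, ha]
              have h1 : j < N l := lt_of_lt_of_le hj (hml.trans hll)
              have h2 : j < N (l + 1) := lt_of_lt_of_le hj hml
              simp only [if_pos h1, if_pos h2]
            · rw [if_neg hj, hb]
              have h1 : ¬ j < N (m + 1) := fun h => hj (lt_of_lt_of_le h hmm)
              simp only [if_neg hj, if_neg h1, sub_zero, mul_zero]
          rw [Finset.sum_congr rfl hstep,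
            sum_if_lt K (N m) (hml.trans hll)
              (fun j => (((N l : ℝ))⁻¹ - ((N (l + 1) : ℝ))⁻¹) * b j),
            ← Finset.mul_sum]
          have hbsum : ∑ j ∈ Finset.range (N m), b j = 0 := by
            simp only [hb, Finset.sum_sub_distrib]
            rw [Finset.sum_congr rfl (fun j hj =>
                if_pos (Finset.mem_range.1 hj) :
                ∀ j ∈ Finset.range (N m),
                  (if j < N m then ((N m : ℝ))⁻¹ else 0) = ((N m : ℝ))⁻¹),
              sum_if_lt (N m) (N (m + 1)) hmm (fun _ => ((N (m + 1) : ℝ))⁻¹)]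
            simp only [Finset.sum_const, Finset.card_range, nsmul_eq_mul]
            rw [mul_inv_cancel₀ (by exact_mod_cast hNmpos.ne'),
              mul_inv_cancel₀ (by exact_mod_cast hNm1pos.ne'), sub_self]
          rw [hbsum, mul_zero]
        rw [hab, zero_mul]
end

section
/- Uncoupled MLMF variance (Theorem 3, independent case): Var(Y_ind) = σ_L² Σ_{l=1}^{L} (ρ_{l,L}² + ρ_{l−1,L}²)/N_l. -/
open MeasureTheory ProbabilityTheory Finset

/-- Theorem 3, independent/uncoupled case:
`Var(Y_ind) = σ_L² Σ_{l=1}^{L} (ρ_{l,L}² + ρ_{l−1,L}²)/N_l`, where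
`Y_ind = P + Σ_{l=1}^{L−1} a_l* (A_l − B_l)` with `a_l* = ρ_{l,L} σ_L / σ_l`, and where
`A_l`, `B_l`, `P` are sample means of `N_l`, `N_{l+1}`, `N_L` i.i.d. copies of
square-integrable random variables with variances `σ_l²`, `σ_l²`, `σ_L²`, all of the
`2L−1` sample families being mutually independent (no coupling).  Here `W (f, j)` is the
`j`-th sample of family `f`: family `0` is used for `P`, family `l` for `A_l` and family
`L + l` for `B_l` (`1 ≤ l ≤ L−1`); joint independence of all `W (f, j)` expresses both
within-family i.i.d. sampling and mutual independence of the families. -/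
theorem stmt_11
    {Ω : Type} [MeasurableSpace Ω] (μ : Measure Ω) [IsProbabilityMeasure μ]
    (L : ℕ) (hL : 1 ≤ L)
    (σ ρ : ℕ → ℝ)
    (hσpos : ∀ l ∈ Finset.Icc 1 L, 0 < σ l)
    (hρ0 : ρ 0 = 0) (hρL : ρ L = 1)
    (N : ℕ → ℕ)
    (hNnest : ∀ l ∈ Finset.Icc 1 (L - 1), N (l + 1) ≤ N l)
    (hNLpos : 1 ≤ N L)
    (W : ℕ × ℕ → Ω → ℝ)
    (hmeas : ∀ p, Measurable (W p))
    (hindep : iIndepFun W μ)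
    (hident : ∀ f j, IdentDistrib (W (f, j)) (W (f, 0)) μ μ)
    (hL2 : ∀ p, MemLp (W p) 2 μ)
    (hvarP : variance (W (0, 0)) μ = (σ L) ^ 2)
    (hvarA : ∀ l ∈ Finset.Icc 1 (L - 1), variance (W (l, 0)) μ = (σ l) ^ 2)
    (hvarB : ∀ l ∈ Finset.Icc 1 (L - 1), variance (W (L + l, 0)) μ = (σ l) ^ 2) :
    variance (fun ω => sampleMean (N L) (fun j ω' => W (0, j) ω') ω
        + ∑ l ∈ Finset.Icc 1 (L - 1),
            (ρ l * σ L / σ l) * (sampleMean (N l) (fun j ω' => W (l, j) ω') ω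
              - sampleMean (N (l + 1)) (fun j ω' => W (L + l, j) ω') ω)) μ
      = (σ L) ^ 2 * ∑ l ∈ Finset.Icc 1 L, ((ρ l) ^ 2 + (ρ (l - 1)) ^ 2) / N l := by
  classical
  -- N k ≥ 1 on [1, L]
  have hNpos : ∀ k ∈ Finset.Icc 1 L, 1 ≤ N k := by
    have key : ∀ d k, k + d = L → 1 ≤ k → 1 ≤ N k := by
      intro d
      induction d with
      | zero =>
        intro k hk _
        have : k = L := by omega
        simpa [this] using hNLpos
      | succ d ih =>
        intro k hk hk1
        have h1 : k ∈ Finset.Icc 1 (L - 1) := by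
          simp only [Finset.mem_Icc]; omega
        have := hNnest k h1
        have := ih (k + 1) (by omega) (by omega)
        omega
    intro k hk
    simp only [Finset.mem_Icc] at hk
    exact key (L - k) k (by omega) hk.1
  -- coefficients and sample counts per family
  set c : ℕ → ℝ := fun f =>
    if f = 0 then (N L : ℝ)⁻¹
    else if f ≤ L - 1 then (ρ f * σ L / σ f) * (N f : ℝ)⁻¹
    else -(ρ (f - L) * σ L / σ (f - L)) * (N (f - L + 1) : ℝ)⁻¹ with hc
  set n : ℕ → ℕ := fun f =>
    if f = 0 then N L else if f ≤ L - 1 then N f else N (f - L + 1) with hn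
  set X : ℕ × ℕ → Ω → ℝ := fun p ω => c p.1 * W p ω with hX
  set A : Finset ℕ := Finset.Icc 1 (L - 1) with hA
  set B : Finset ℕ := A.image (fun l => L + l) with hB
  set F : Finset ℕ := insert 0 (A ∪ B) with hF
  set S : Finset (ℕ × ℕ) :=
    F.biUnion (fun f => (Finset.range (n f)).image (fun j => (f, j))) with hS
  -- basic facts about c, n on the pieces
  have hc0 : c 0 = (N L : ℝ)⁻¹ := by simp [hc]
  have hn0 : n 0 = N L := by simp [hn]
  have hcA : ∀ l ∈ A, c l = (ρ l * σ L / σ l) * (N l : ℝ)⁻¹ := by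
    intro l hl
    simp only [hA, Finset.mem_Icc] at hl
    simp only [hc]
    rw [if_neg (by omega), if_pos (by omega)]
  have hnA : ∀ l ∈ A, n l = N l := by
    intro l hl
    simp only [hA, Finset.mem_Icc] at hl
    simp only [hn]
    rw [if_neg (by omega), if_pos (by omega)]
  have hcB : ∀ l ∈ A, c (L + l) = -(ρ l * σ L / σ l) * (N (l + 1) : ℝ)⁻¹ := by
    intro l hl
    simp only [hA, Finset.mem_Icc] at hl
    simp only [hc]
    rw [if_neg (by omega), if_neg (by omega)]
    simp only [Nat.add_sub_cancel_left]
  have hnB : ∀ l ∈ A, n (L + l) = N (l + 1) := by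
    intro l hl
    simp only [hA, Finset.mem_Icc] at hl
    simp only [hn]
    rw [if_neg (by omega), if_neg (by omega)]
    simp only [Nat.add_sub_cancel_left]
  -- sum over S decomposes as nested sums
  have hsumS : ∀ (g : ℕ × ℕ → ℝ),
      ∑ p ∈ S, g p = ∑ f ∈ F, ∑ j ∈ Finset.range (n f), g (f, j) := by
    intro g
    rw [hS, Finset.sum_biUnion]
    · refine Finset.sum_congr rfl fun f _ => ?_
      rw [Finset.sum_image]
      intro x _ y _ h
      exact (Prod.mk.injEq _ _ _ _ ▸ h).2
    · intro f hf f' hf' hff'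
      simp only [Finset.disjoint_left, Finset.mem_image, Finset.mem_range]
      rintro p ⟨j, _, rfl⟩ ⟨j', _, h⟩
      exact hff' (by simpa using (Prod.mk.injEq _ _ _ _ ▸ h).1.symm)
  -- sum over F decomposes
  have h0notAB : 0 ∉ A ∪ B := by
    simp only [hA, hB, Finset.mem_union, Finset.mem_Icc, Finset.mem_image]
    push_neg
    constructor
    · omega
    · intro l hl
      omega
  have hABdisj : Disjoint A B := by
    simp only [Finset.disjoint_left, hA, hB, Finset.mem_Icc, Finset.mem_image]
    rintro x hx ⟨l, hl, rfl⟩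
    omega
  have hBinj : ∀ x ∈ A, ∀ y ∈ A, L + x = L + y → x = y := by
    intro x _ y _ h; omega
  have hsumF : ∀ (g : ℕ → ℝ),
      ∑ f ∈ F, g f = g 0 + ∑ l ∈ A, g l + ∑ l ∈ A, g (L + l) := by
    intro g
    rw [hF, Finset.sum_insert h0notAB, Finset.sum_union hABdisj,
      Finset.sum_image hBinj, add_assoc]
  -- the estimator equals the big sum
  have hYeq : (fun ω => sampleMean (N L) (fun j ω' => W (0, j) ω') ω
        + ∑ l ∈ Finset.Icc 1 (L - 1),
            (ρ l * σ L / σ l) * (sampleMean (N l) (fun j ω' => W (l, j) ω') ω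
              - sampleMean (N (l + 1)) (fun j ω' => W (L + l, j) ω') ω))
      = ∑ p ∈ S, X p := by
    funext ω
    rw [Finset.sum_apply]
    have : ∑ p ∈ S, X p ω = ∑ f ∈ F, ∑ j ∈ Finset.range (n f), X (f, j) ω :=
      hsumS (fun p => X p ω)
    rw [this, hsumF (fun f => ∑ j ∈ Finset.range (n f), X (f, j) ω)]
    have e0 : ∑ j ∈ Finset.range (n 0), X (0, j) ω
        = sampleMean (N L) (fun j ω' => W (0, j) ω') ω := by
      simp only [hX, hc0, hn0, sampleMean, Finset.mul_sum]
    have eA : ∀ l ∈ A, ∑ j ∈ Finset.range (n l), X (l, j) ω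
        = (ρ l * σ L / σ l) * sampleMean (N l) (fun j ω' => W (l, j) ω') ω := by
      intro l hl
      simp only [hX, hcA l hl, hnA l hl, sampleMean, Finset.mul_sum]
      exact Finset.sum_congr rfl fun j _ => by ring
    have eB : ∀ l ∈ A, ∑ j ∈ Finset.range (n (L + l)), X (L + l, j) ω
        = -((ρ l * σ L / σ l) * sampleMean (N (l + 1)) (fun j ω' => W (L + l, j) ω') ω) := by
      intro l hl
      simp only [hX, hcB l hl, hnB l hl, sampleMean, Finset.mul_sum, ← Finset.sum_neg_distrib]
      exact Finset.sum_congr rfl fun j _ => by ring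
    rw [e0, Finset.sum_congr rfl eA, Finset.sum_congr rfl eB]
    rw [← hA, add_assoc, ← Finset.sum_add_distrib]
    congr 1
    refine Finset.sum_congr rfl fun l hl => ?_
    ring
  rw [hYeq]
  -- variance of the sum of independent variables
  have hvar : variance (∑ p ∈ S, X p) μ = ∑ p ∈ S, variance (X p) μ := by
    refine IndepFun.variance_sum (fun p _ => (hL2 p).const_mul _) ?_
    intro p hp q hq hpq
    have h := hindep.indepFun hpq
    exact h.comp (measurable_const_mul (c p.1)) (measurable_const_mul (c q.1))
  rw [hvar]
  -- variance of each term
  have hvarX : ∀ p : ℕ × ℕ, variance (X p) μ = (c p.1) ^ 2 * variance (W (p.1, 0)) μ := by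
    intro p
    have : variance (X p) μ = (c p.1) ^ 2 * variance (W p) μ := variance_const_mul (c p.1) (W p) μ
    rw [this, (hident p.1 p.2).variance_eq]
  rw [Finset.sum_congr rfl (fun p _ => hvarX p),
    hsumS (fun p => (c p.1) ^ 2 * variance (W (p.1, 0)) μ),
    hsumF (fun f => ∑ _j ∈ Finset.range (n f), (c f) ^ 2 * variance (W (f, 0)) μ)]
  simp only [Finset.sum_const, Finset.card_range, nsmul_eq_mul]
  -- numeric facts
  have hNL : (N L : ℝ) ≠ 0 := by positivity
  have hterm0 : (n 0 : ℝ) * ((c 0) ^ 2 * variance (W (0, 0)) μ) = σ L ^ 2 / N L := by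
    rw [hc0, hn0, hvarP]
    field_simp
  have htermA : ∀ l ∈ A, (n l : ℝ) * ((c l) ^ 2 * variance (W (l, 0)) μ)
      = σ L ^ 2 * (ρ l ^ 2 / N l) := by
    intro l hl
    have hl' := hl
    simp only [hA, Finset.mem_Icc] at hl'
    have hNl : (N l : ℝ) ≠ 0 := by
      have := hNpos l (by simp only [Finset.mem_Icc]; omega)
      positivity
    have hσl : σ l ≠ 0 := (hσpos l (by simp only [Finset.mem_Icc]; omega)).ne'
    rw [hcA l hl, hnA l hl, hvarA l hl]
    field_simp
  have htermB : ∀ l ∈ A, (n (L + l) : ℝ) * ((c (L + l)) ^ 2 * variance (W (L + l, 0)) μ)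
      = σ L ^ 2 * (ρ l ^ 2 / N (l + 1)) := by
    intro l hl
    have hl' := hl
    simp only [hA, Finset.mem_Icc] at hl'
    have hNl : (N (l + 1) : ℝ) ≠ 0 := by
      have := hNpos (l + 1) (by simp only [Finset.mem_Icc]; omega)
      positivity
    have hσl : σ l ≠ 0 := (hσpos l (by simp only [Finset.mem_Icc]; omega)).ne'
    rw [hcB l hl, hnB l hl, hvarB l hl]
    field_simp
  rw [hterm0, Finset.sum_congr rfl htermA, Finset.sum_congr rfl htermB]
  -- final algebraic identity
  rw [← Finset.mul_sum, ← Finset.mul_sum]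
  have hsplit : ∑ l ∈ Finset.Icc 1 L, ((ρ l) ^ 2 + (ρ (l - 1)) ^ 2) / (N l : ℝ)
      = (∑ l ∈ Finset.Icc 1 L, (ρ l) ^ 2 / (N l : ℝ))
        + ∑ l ∈ Finset.Icc 1 L, (ρ (l - 1)) ^ 2 / (N l : ℝ) := by
    rw [← Finset.sum_add_distrib]
    exact Finset.sum_congr rfl fun l _ => by rw [add_div]
  have hIccL : Finset.Icc 1 L = insert L (Finset.Icc 1 (L - 1)) := by
    ext x
    simp only [Finset.mem_insert, Finset.mem_Icc]
    omega
  have hLnot : L ∉ Finset.Icc 1 (L - 1) := by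
    simp only [Finset.mem_Icc]; omega
  have hfirst : ∑ l ∈ Finset.Icc 1 L, (ρ l) ^ 2 / (N l : ℝ)
      = 1 / N L + ∑ l ∈ Finset.Icc 1 (L - 1), (ρ l) ^ 2 / (N l : ℝ) := by
    rw [hIccL, Finset.sum_insert hLnot, hρL]
    norm_num
  have hsecond : ∑ l ∈ Finset.Icc 1 L, (ρ (l - 1)) ^ 2 / (N l : ℝ)
      = ∑ l ∈ Finset.Icc 1 (L - 1), (ρ l) ^ 2 / (N (l + 1) : ℝ) := by
    rw [show Finset.Icc 1 L = insert 1 (Finset.Icc 2 L) by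
        ext x; simp only [Finset.mem_insert, Finset.mem_Icc]; omega,
      Finset.sum_insert (by simp only [Finset.mem_Icc]; omega)]
    simp only [show (1 : ℕ) - 1 = 0 from rfl, hρ0]
    rw [show Finset.Icc 2 L = (Finset.Icc 1 (L - 1)).image (fun l => l + 1) by
        ext x
        simp only [Finset.mem_image, Finset.mem_Icc]
        constructor
        · intro hx; exact ⟨x - 1, by omega, by omega⟩
        · rintro ⟨y, hy, rfl⟩; omega,
      Finset.sum_image (by intro x _ y _ h; simp only at h; omega)]
    simp only [Nat.add_sub_cancel]
    norm_num
  rw [hsplit, hfirst, hsecond]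
  have hdiv : σ L ^ 2 / (N L : ℝ) = σ L ^ 2 * (1 / N L) := by ring
  rw [hdiv]
  ring
end

section
/- Optimal sample allocation (Theorem 4): the allocation N_l* = (B / Σ_{j=1}^{L} √(C_j R_j)) · √(R_l / C_l) exhausts the budget, Σ_{l=1}^{L} N_l* C_l = B, and minimizes the variance Σ_{l=1}^{L} R_l / N_l among all positive real allocations satisfying the budget constraint: for all N_1, …, N_L > 0 with Σ_{l=1}^{L} N_l C_l ≤ B, one has Σ_{l=1}^{L} R_l / N_l ≥ Σ_{l=1}^{L} R_l / N_l*. -/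
open Finset

/-- Theorem 4, optimal sample allocation: the allocation
`N_l* = (B / Σ_{j=1}^{L} √(C_j R_j)) · √(R_l / C_l)` exhausts the budget,
`Σ_{l=1}^{L} N_l* C_l = B`, and minimizes the variance `Σ_{l=1}^{L} R_l / N_l` among all
positive real allocations satisfying the budget constraint `Σ_{l=1}^{L} N_l C_l ≤ B`. -/
theorem stmt_13
    (L : ℕ) (hL : 1 ≤ L)
    (R C : ℕ → ℝ)
    (hR : ∀ l ∈ Finset.Icc 1 L, 0 < R l)
    (hC : ∀ l ∈ Finset.Icc 1 L, 0 < C l)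
    (B : ℝ) (hB : 0 < B)
    (Nstar : ℕ → ℝ)
    (hNstar : ∀ l ∈ Finset.Icc 1 L,
      Nstar l = B / (∑ j ∈ Finset.Icc 1 L, Real.sqrt (C j * R j)) * Real.sqrt (R l / C l)) :
    (∑ l ∈ Finset.Icc 1 L, Nstar l * C l = B) ∧
    (∀ N : ℕ → ℝ, (∀ l ∈ Finset.Icc 1 L, 0 < N l) →
      (∑ l ∈ Finset.Icc 1 L, N l * C l ≤ B) →
      ∑ l ∈ Finset.Icc 1 L, R l / Nstar l ≤ ∑ l ∈ Finset.Icc 1 L, R l / N l) := by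
  set S := ∑ j ∈ Finset.Icc 1 L, Real.sqrt (C j * R j) with hSdef
  have h1mem : (1 : ℕ) ∈ Finset.Icc 1 L := by simp [hL]
  have hS : 0 < S := by
    apply Finset.sum_pos' (fun j hj => Real.sqrt_nonneg _)
    exact ⟨1, h1mem, Real.sqrt_pos.mpr (mul_pos (hC 1 h1mem) (hR 1 h1mem))⟩
  -- key algebraic facts for l in range
  have key1 : ∀ l ∈ Finset.Icc 1 L, Real.sqrt (R l / C l) * C l = Real.sqrt (C l * R l) := by
    intro l hl
    have hCl := hC l hl
    have hRl := hR l hl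
    rw [← Real.sqrt_sq hCl.le, ← Real.sqrt_mul (by positivity)]
    congr 1
    field_simp
    rw [Real.sq_sqrt (by positivity)]
  have key2 : ∀ l ∈ Finset.Icc 1 L, Real.sqrt (R l / C l) * Real.sqrt (C l * R l) = R l := by
    intro l hl
    have hCl := hC l hl
    have hRl := hR l hl
    rw [← Real.sqrt_mul (by positivity)]
    rw [show R l / C l * (C l * R l) = (R l) ^ 2 by field_simp]
    exact Real.sqrt_sq hRl.le
  have hsqrtpos : ∀ l ∈ Finset.Icc 1 L, 0 < Real.sqrt (R l / C l) := by
    intro l hl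
    exact Real.sqrt_pos.mpr (div_pos (hR l hl) (hC l hl))
  have budget : ∑ l ∈ Finset.Icc 1 L, Nstar l * C l = B := by
    have : ∀ l ∈ Finset.Icc 1 L, Nstar l * C l = B / S * Real.sqrt (C l * R l) := by
      intro l hl
      rw [hNstar l hl, mul_assoc, key1 l hl]
    rw [Finset.sum_congr rfl this, ← Finset.mul_sum, ← hSdef]
    field_simp
  refine ⟨budget, ?_⟩
  intro N hN hbudget
  -- variance at Nstar equals S^2 / B
  have hvar : ∑ l ∈ Finset.Icc 1 L, R l / Nstar l = S ^ 2 / B := by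
    have : ∀ l ∈ Finset.Icc 1 L, R l / Nstar l = S / B * Real.sqrt (C l * R l) := by
      intro l hl
      have hs := hsqrtpos l hl
      have hgoal : S / B * Real.sqrt (C l * R l) * (B / S * Real.sqrt (R l / C l)) = R l := by
        calc S / B * Real.sqrt (C l * R l) * (B / S * Real.sqrt (R l / C l))
            = Real.sqrt (R l / C l) * Real.sqrt (C l * R l) := by
              field_simp
          _ = R l := key2 l hl
      rw [hNstar l hl, div_eq_iff (mul_pos (div_pos hB hS) hs).ne']
      exact hgoal.symm
    rw [Finset.sum_congr rfl this, ← Finset.mul_sum, ← hSdef]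
    ring
  rw [hvar]
  -- Cauchy-Schwarz
  have CS := Finset.sum_mul_sq_le_sq_mul_sq (Finset.Icc 1 L)
      (fun l => Real.sqrt (N l * C l)) (fun l => Real.sqrt (R l / N l))
  have e1 : ∀ l ∈ Finset.Icc 1 L,
      Real.sqrt (N l * C l) * Real.sqrt (R l / N l) = Real.sqrt (C l * R l) := by
    intro l hl
    rw [← Real.sqrt_mul (mul_nonneg (hN l hl).le (hC l hl).le)]
    congr 1
    field_simp [(hN l hl).ne']
  have e2 : ∀ l ∈ Finset.Icc 1 L, Real.sqrt (N l * C l) ^ 2 = N l * C l := by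
    intro l hl
    exact Real.sq_sqrt (mul_nonneg (hN l hl).le (hC l hl).le)
  have e3 : ∀ l ∈ Finset.Icc 1 L, Real.sqrt (R l / N l) ^ 2 = R l / N l := by
    intro l hl
    exact Real.sq_sqrt (div_nonneg (hR l hl).le (hN l hl).le)
  rw [Finset.sum_congr rfl e1, Finset.sum_congr rfl e2, Finset.sum_congr rfl e3] at CS
  have hvarpos : 0 ≤ ∑ l ∈ Finset.Icc 1 L, R l / N l :=
    Finset.sum_nonneg fun l hl => le_of_lt (div_pos (hR l hl) (hN l hl))
  have : S ^ 2 ≤ B * ∑ l ∈ Finset.Icc 1 L, R l / N l :=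
    CS.trans (mul_le_mul_of_nonneg_right hbudget hvarpos)
  rw [div_le_iff₀ hB]
  linarith
end

section
/- L² convergence of the MLMF estimator: for each k ∈ ℕ let N_1(k) ≥ N_2(k) ≥ ⋯ ≥ N_L(k) ≥ 1 be nested sample sizes with N_l(k) → ∞ as k → ∞ for every l, and let Y*_k be the coupled MLMF estimator with the optimal coefficients a_l* = ρ_{l,L} σ_L / σ_l and sample sizes N_l(k). Then E[(Y*_k − E[Z_1[L]])²] → 0 as k → ∞, i.e. Y*_k converges in mean square to the quantity of interest E[Z_1[L]]. -/
open MeasureTheory ProbabilityTheory Finset Filter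
open scoped ENNReal NNReal

lemma integral_sq_eq_eLpNorm_sq {Ω : Type} [MeasurableSpace Ω] (μ : Measure Ω) (g : Ω → ℝ)
    (hg : MeasureTheory.MemLp g 2 μ) : ∫ ω, g ω ^ 2 ∂μ = (eLpNorm g 2 μ).toReal ^ 2 := by
  have hm : AEStronglyMeasurable (fun ω => g ω ^ 2) μ := by
    have := hg.1.mul hg.1
    exact this.congr (ae_of_all _ fun ω => by simp [pow_two])
  rw [integral_eq_lintegral_of_nonneg_ae (ae_of_all _ fun ω => sq_nonneg (g ω)) hm]
  rw [eLpNorm_eq_lintegral_rpow_enorm_toReal two_ne_zero ENNReal.ofNat_ne_top]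
  simp only [ENNReal.toReal_ofNat, one_div]
  have hA : ∫⁻ ω, ENNReal.ofReal (g ω ^ 2) ∂μ = ∫⁻ ω, ‖g ω‖ₑ ^ (2:ℝ) ∂μ := by
    refine lintegral_congr fun ω => ?_
    rw [show (‖g ω‖ₑ) ^ (2:ℝ) = (‖g ω‖ₑ) ^ (2:ℕ) by
      rw [← ENNReal.rpow_natCast]; norm_num]
    rw [Real.enorm_eq_ofReal_abs, ← ENNReal.ofReal_pow (abs_nonneg _), sq_abs]
  rw [hA, ← ENNReal.toReal_pow, ← ENNReal.rpow_natCast, ← ENNReal.rpow_mul]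
  norm_num

set_option maxHeartbeats 1000000 in
/-- L² convergence of the MLMF estimator: for each `k ∈ ℕ` let
`N_1(k) ≥ ⋯ ≥ N_L(k) ≥ 1` be nested sample sizes with `N_l(k) → ∞` as `k → ∞` for every
`l`, and let `Y*_k` be the coupled MLMF estimator with the optimal coefficients
`a_l* = ρ_{l,L} σ_L / σ_l` and sample sizes `N_l(k)`.  Then
`E[(Y*_k − E[Z_1[L]])²] → 0`, i.e. `Y*_k` converges in mean square to `E[Z_1[L]]`. -/
theorem stmt_17
    {Ω : Type} [MeasurableSpace Ω] (μ : Measure Ω) [IsProbabilityMeasure μ]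
    (L : ℕ) (hL : 1 ≤ L)
    (Z : ℕ → Ω → ℕ → ℝ)
    (hmeas : ∀ j, Measurable (Z j))
    (hindep : iIndepFun Z μ)
    (hident : ∀ j, IdentDistrib (Z j) (Z 0) μ μ)
    (hL2 : ∀ j, ∀ l ∈ Finset.Icc 1 L, MemLp (fun ω => Z j ω l) 2 μ)
    (σ ρ : ℕ → ℝ)
    (hσ : ∀ l ∈ Finset.Icc 1 L, σ l = Real.sqrt (variance (fun ω => Z 0 ω l) μ))
    (hσpos : ∀ l ∈ Finset.Icc 1 L, 0 < σ l)
    (hρ : ∀ l ∈ Finset.Icc 1 L,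
      ρ l = covar μ (fun ω => Z 0 ω l) (fun ω => Z 0 ω L) / (σ l * σ L))
    (N : ℕ → ℕ → ℕ)
    (hNnest : ∀ k, ∀ l ∈ Finset.Icc 1 (L - 1), N k (l + 1) ≤ N k l)
    (hNLpos : ∀ k, 1 ≤ N k L)
    (hNtop : ∀ l ∈ Finset.Icc 1 L, Tendsto (fun k => N k l) atTop atTop) :
    Tendsto (fun k =>
        ∫ ω, (sampleMean (N k L) (fun j ω' => Z j ω' L) ω
          + (∑ l ∈ Finset.Icc 1 (L - 1),
              (ρ l * σ L / σ l) * (sampleMean (N k l) (fun j ω' => Z j ω' l) ω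
                - sampleMean (N k (l + 1)) (fun j ω' => Z j ω' l) ω))
          - μ[fun ω' => Z 0 ω' L]) ^ 2 ∂μ)
      atTop (nhds 0) := by
  classical
  have hLmem : L ∈ Finset.Icc 1 L := Finset.mem_Icc.2 ⟨hL, le_refl L⟩
  -- centered sample means
  set g : ℕ → ℕ → Ω → ℝ := fun l n ω =>
    sampleMean n (fun j ω' => Z j ω' l) ω - μ[fun ω' => Z 0 ω' l] with hg
  -- membership facts
  have hmemIcc : ∀ l ∈ Finset.Icc 1 (L - 1), l ∈ Finset.Icc 1 L ∧ l + 1 ∈ Finset.Icc 1 L := by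
    intro l hl
    rw [Finset.mem_Icc] at hl
    exact ⟨Finset.mem_Icc.2 ⟨hl.1, by omega⟩, Finset.mem_Icc.2 ⟨by omega, by omega⟩⟩
  -- L² law of large numbers for each level
  have hT : ∀ l ∈ Finset.Icc 1 L,
      Tendsto (fun n => eLpNorm (g l n) 2 μ) atTop (nhds 0) := by
    intro l hl
    have h := strong_law_Lp (p := 2) (μ := μ) one_le_two ENNReal.ofNat_ne_top
      (fun j ω => Z j ω l) (hL2 0 l hl)
      (fun i j hij => (hindep.indepFun hij).comp (measurable_pi_apply l) (measurable_pi_apply l))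
      (fun i => (hident i).comp (measurable_pi_apply l))
    simpa [hg, sampleMean, smul_eq_mul] using h
  -- MemLp of centered sample means
  have hgmem : ∀ l ∈ Finset.Icc 1 L, ∀ n, MemLp (g l n) 2 μ := by
    intro l hl n
    have hsum : MemLp (fun ω => ∑ j ∈ Finset.range n, Z j ω l) 2 μ :=
      memLp_finset_sum (Finset.range n) (fun j _ => hL2 j l hl)
    have hsm : MemLp (fun ω => sampleMean n (fun j ω' => Z j ω' l) ω) 2 μ := by
      simpa [sampleMean] using hsum.const_mul ((n : ℝ)⁻¹)
    exact hsm.sub (memLp_const _)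
  -- rewrite the integrand
  have hFeq : ∀ k, (fun ω => sampleMean (N k L) (fun j ω' => Z j ω' L) ω
          + (∑ l ∈ Finset.Icc 1 (L - 1),
              (ρ l * σ L / σ l) * (sampleMean (N k l) (fun j ω' => Z j ω' l) ω
                - sampleMean (N k (l + 1)) (fun j ω' => Z j ω' l) ω))
          - μ[fun ω' => Z 0 ω' L])
      = fun ω => g L (N k L) ω + ∑ l ∈ Finset.Icc 1 (L - 1),
          (ρ l * σ L / σ l) * (g l (N k l) ω - g l (N k (l + 1)) ω) := by
    intro k
    funext ω
    have hsum : ∑ l ∈ Finset.Icc 1 (L - 1),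
        (ρ l * σ L / σ l) * (g l (N k l) ω - g l (N k (l + 1)) ω)
        = ∑ l ∈ Finset.Icc 1 (L - 1),
            (ρ l * σ L / σ l) * (sampleMean (N k l) (fun j ω' => Z j ω' l) ω
              - sampleMean (N k (l + 1)) (fun j ω' => Z j ω' l) ω) := by
      refine Finset.sum_congr rfl fun l hl => ?_
      simp only [hg]; ring
    rw [hsum]; simp only [hg]; ring
  -- MemLp of the whole centered estimator
  have hFmem : ∀ k, MemLp (fun ω => sampleMean (N k L) (fun j ω' => Z j ω' L) ω
          + (∑ l ∈ Finset.Icc 1 (L - 1),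
              (ρ l * σ L / σ l) * (sampleMean (N k l) (fun j ω' => Z j ω' l) ω
                - sampleMean (N k (l + 1)) (fun j ω' => Z j ω' l) ω))
          - μ[fun ω' => Z 0 ω' L]) 2 μ := by
    intro k
    rw [hFeq k]
    refine (hgmem L hLmem (N k L)).add ?_
    refine memLp_finset_sum _ (fun l hl => ?_)
    obtain ⟨h1, h2⟩ := hmemIcc l hl
    exact ((hgmem l h1 (N k l)).sub (hgmem l h1 (N k (l + 1)))).const_mul _
  -- triangle inequality bound
  have hbound : ∀ k, eLpNorm (fun ω => sampleMean (N k L) (fun j ω' => Z j ω' L) ω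
          + (∑ l ∈ Finset.Icc 1 (L - 1),
              (ρ l * σ L / σ l) * (sampleMean (N k l) (fun j ω' => Z j ω' l) ω
                - sampleMean (N k (l + 1)) (fun j ω' => Z j ω' l) ω))
          - μ[fun ω' => Z 0 ω' L]) 2 μ
      ≤ eLpNorm (g L (N k L)) 2 μ + ∑ l ∈ Finset.Icc 1 (L - 1),
          (‖ρ l * σ L / σ l‖₊ : ℝ≥0∞) *
            (eLpNorm (g l (N k l)) 2 μ + eLpNorm (g l (N k (l + 1))) 2 μ) := by
    intro k
    rw [hFeq k]
    set d : ℕ → Ω → ℝ := fun l ω => g l (N k l) ω - g l (N k (l + 1)) ω with hd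
    have hdm : ∀ l ∈ Finset.Icc 1 (L - 1), MemLp (d l) 2 μ := by
      intro l hl
      obtain ⟨h1, h2⟩ := hmemIcc l hl
      exact (hgmem l h1 (N k l)).sub (hgmem l h1 (N k (l + 1)))
    have e1 : (fun ω => g L (N k L) ω + ∑ l ∈ Finset.Icc 1 (L - 1),
          (ρ l * σ L / σ l) * (g l (N k l) ω - g l (N k (l + 1)) ω))
        = g L (N k L) + ∑ l ∈ Finset.Icc 1 (L - 1), (ρ l * σ L / σ l) • d l := by
      funext ω
      simp [hd, Finset.sum_apply, smul_eq_mul]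
    rw [e1]
    have step1 : eLpNorm (g L (N k L) + ∑ l ∈ Finset.Icc 1 (L - 1),
          (ρ l * σ L / σ l) • d l) 2 μ
        ≤ eLpNorm (g L (N k L)) 2 μ
          + eLpNorm (∑ l ∈ Finset.Icc 1 (L - 1), (ρ l * σ L / σ l) • d l) 2 μ :=
      eLpNorm_add_le (hgmem L hLmem (N k L)).1
        (memLp_finset_sum' _ (fun l hl => (hdm l hl).const_smul _)).1 one_le_two
    have step2 : eLpNorm (∑ l ∈ Finset.Icc 1 (L - 1), (ρ l * σ L / σ l) • d l) 2 μ
        ≤ ∑ l ∈ Finset.Icc 1 (L - 1), eLpNorm ((ρ l * σ L / σ l) • d l) 2 μ :=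
      eLpNorm_sum_le (fun l hl => ((hdm l hl).const_smul _).1) one_le_two
    have step3 : ∀ l ∈ Finset.Icc 1 (L - 1), eLpNorm ((ρ l * σ L / σ l) • d l) 2 μ
        ≤ (‖ρ l * σ L / σ l‖₊ : ℝ≥0∞) *
            (eLpNorm (g l (N k l)) 2 μ + eLpNorm (g l (N k (l + 1))) 2 μ) := by
      intro l hl
      obtain ⟨h1, h2⟩ := hmemIcc l hl
      rw [eLpNorm_const_smul]
      exact mul_le_mul_right
        (eLpNorm_sub_le (hgmem l h1 (N k l)).1 (hgmem l h1 (N k (l + 1))).1 one_le_two) _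
    exact step1.trans (add_le_add_right (step2.trans (Finset.sum_le_sum step3)) _)
  -- the bound tends to zero
  have hBtend : Tendsto (fun k => eLpNorm (g L (N k L)) 2 μ + ∑ l ∈ Finset.Icc 1 (L - 1),
          (‖ρ l * σ L / σ l‖₊ : ℝ≥0∞) *
            (eLpNorm (g l (N k l)) 2 μ + eLpNorm (g l (N k (l + 1))) 2 μ))
      atTop (nhds 0) := by
    have h1 : Tendsto (fun k => eLpNorm (g L (N k L)) 2 μ) atTop (nhds 0) :=
      (hT L hLmem).comp (hNtop L hLmem)
    have h2 : Tendsto (fun k => ∑ l ∈ Finset.Icc 1 (L - 1),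
        (‖ρ l * σ L / σ l‖₊ : ℝ≥0∞) *
          (eLpNorm (g l (N k l)) 2 μ + eLpNorm (g l (N k (l + 1))) 2 μ)) atTop (nhds 0) := by
      have hterm : ∀ l ∈ Finset.Icc 1 (L - 1),
          Tendsto (fun k => (‖ρ l * σ L / σ l‖₊ : ℝ≥0∞) *
            (eLpNorm (g l (N k l)) 2 μ + eLpNorm (g l (N k (l + 1))) 2 μ)) atTop (nhds 0) := by
        intro l hl
        obtain ⟨hm1, hm2⟩ := hmemIcc l hl
        have ht1 : Tendsto (fun k => eLpNorm (g l (N k l)) 2 μ) atTop (nhds 0) :=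
          (hT l hm1).comp (hNtop l hm1)
        have ht2 : Tendsto (fun k => eLpNorm (g l (N k (l + 1))) 2 μ) atTop (nhds 0) :=
          (hT l hm1).comp (hNtop (l + 1) hm2)
        have hadd : Tendsto (fun k => eLpNorm (g l (N k l)) 2 μ
            + eLpNorm (g l (N k (l + 1))) 2 μ) atTop (nhds 0) := by
          simpa using ht1.add ht2
        have := ENNReal.Tendsto.const_mul (a := (‖ρ l * σ L / σ l‖₊ : ℝ≥0∞)) hadd
          (Or.inr ENNReal.coe_ne_top)
        simpa using this
      have := tendsto_finset_sum (Finset.Icc 1 (L - 1)) hterm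
      simpa using this
    simpa using h1.add h2
  -- squeeze: eLpNorm of the centered estimator tends to zero
  have hkey : Tendsto (fun k => eLpNorm (fun ω => sampleMean (N k L) (fun j ω' => Z j ω' L) ω
          + (∑ l ∈ Finset.Icc 1 (L - 1),
              (ρ l * σ L / σ l) * (sampleMean (N k l) (fun j ω' => Z j ω' l) ω
                - sampleMean (N k (l + 1)) (fun j ω' => Z j ω' l) ω))
          - μ[fun ω' => Z 0 ω' L]) 2 μ) atTop (nhds 0) :=
    tendsto_of_tendsto_of_tendsto_of_le_of_le tendsto_const_nhds hBtend
      (fun k => zero_le) hbound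
  -- convert to convergence of the second moment
  have htr : Tendsto (fun k => (eLpNorm (fun ω => sampleMean (N k L) (fun j ω' => Z j ω' L) ω
          + (∑ l ∈ Finset.Icc 1 (L - 1),
              (ρ l * σ L / σ l) * (sampleMean (N k l) (fun j ω' => Z j ω' l) ω
                - sampleMean (N k (l + 1)) (fun j ω' => Z j ω' l) ω))
          - μ[fun ω' => Z 0 ω' L]) 2 μ).toReal) atTop (nhds 0) := by
    have := (ENNReal.tendsto_toReal (a := 0) (by simp)).comp hkey
    exact this
  have hconv : (fun k =>
        ∫ ω, (sampleMean (N k L) (fun j ω' => Z j ω' L) ω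
          + (∑ l ∈ Finset.Icc 1 (L - 1),
              (ρ l * σ L / σ l) * (sampleMean (N k l) (fun j ω' => Z j ω' l) ω
                - sampleMean (N k (l + 1)) (fun j ω' => Z j ω' l) ω))
          - μ[fun ω' => Z 0 ω' L]) ^ 2 ∂μ)
      = fun k => (eLpNorm (fun ω => sampleMean (N k L) (fun j ω' => Z j ω' L) ω
          + (∑ l ∈ Finset.Icc 1 (L - 1),
              (ρ l * σ L / σ l) * (sampleMean (N k l) (fun j ω' => Z j ω' l) ω
                - sampleMean (N k (l + 1)) (fun j ω' => Z j ω' l) ω))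
          - μ[fun ω' => Z 0 ω' L]) 2 μ).toReal ^ 2 := by
    funext k
    exact integral_sq_eq_eLpNorm_sq μ _ (hFmem k)
  rw [hconv]
  simpa using htr.pow 2
end

section
/- O(ε⁻²) sample complexity (Corollary to Theorem 4): for every ε > 0, set B(ε) = (Σ_{l=1}^{L} √(R_l C_l))² · ε⁻² and let N_l*(ε) = (B(ε) / Σ_{j=1}^{L} √(C_j R_j)) · √(R_l / C_l) be the optimal allocation for budget B(ε). Then Σ_{l=1}^{L} N_l*(ε) C_l = B(ε) and Σ_{l=1}^{L} R_l / N_l*(ε) = ε²; in particular, the computational budget needed to achieve estimator variance ε² under optimal allocation is proportional to ε⁻². -/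
open Finset

/-- O(ε⁻²) sample complexity: for every `ε > 0`, set
`B(ε) = (Σ_{l=1}^{L} √(R_l C_l))² · ε⁻²` and let
`N_l*(ε) = (B(ε) / Σ_{j=1}^{L} √(C_j R_j)) · √(R_l / C_l)` be the optimal allocation for
budget `B(ε)`.  Then `Σ_{l=1}^{L} N_l*(ε) C_l = B(ε)` and `Σ_{l=1}^{L} R_l / N_l*(ε) = ε²`;
in particular, the computational budget needed to achieve estimator variance `ε²` under
optimal allocation is proportional to `ε⁻²`. -/
theorem stmt_18
    (L : ℕ) (hL : 1 ≤ L)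
    (R C : ℕ → ℝ)
    (hR : ∀ l ∈ Finset.Icc 1 L, 0 < R l)
    (hC : ∀ l ∈ Finset.Icc 1 L, 0 < C l)
    (ε : ℝ) (hε : 0 < ε)
    (B : ℝ)
    (hB : B = (∑ l ∈ Finset.Icc 1 L, Real.sqrt (R l * C l)) ^ 2 * ε⁻¹ ^ 2)
    (Nstar : ℕ → ℝ)
    (hNstar : ∀ l ∈ Finset.Icc 1 L,
      Nstar l = B / (∑ j ∈ Finset.Icc 1 L, Real.sqrt (C j * R j)) * Real.sqrt (R l / C l)) :
    (∑ l ∈ Finset.Icc 1 L, Nstar l * C l = B) ∧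
    (∑ l ∈ Finset.Icc 1 L, R l / Nstar l = ε ^ 2) := by
  set S := ∑ l ∈ Finset.Icc 1 L, Real.sqrt (R l * C l) with hS
  have hCR : (∑ j ∈ Finset.Icc 1 L, Real.sqrt (C j * R j)) = S := by
    apply Finset.sum_congr rfl
    intro j hj
    rw [mul_comm]
  have hSpos : 0 < S := by
    apply Finset.sum_pos
    · intro l hl
      exact Real.sqrt_pos.mpr (mul_pos (hR l hl) (hC l hl))
    · exact ⟨1, Finset.mem_Icc.mpr ⟨le_refl 1, hL⟩⟩
  have hBpos : 0 < B := by
    rw [hB]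
    positivity
  constructor
  · have : ∀ l ∈ Finset.Icc 1 L, Nstar l * C l = B / S * Real.sqrt (R l * C l) := by
      intro l hl
      rw [hNstar l hl, hCR]
      have hCl := hC l hl
      have hRl := hR l hl
      rw [mul_assoc]
      congr 1
      rw [Real.sqrt_div hRl.le, Real.sqrt_mul hRl.le]
      have h3 := Real.mul_self_sqrt hCl.le
      field_simp
      linear_combination (-1 : ℝ) * Real.sq_sqrt hCl.le
    rw [Finset.sum_congr rfl this, ← Finset.mul_sum, ← hS]
    field_simp
  · have : ∀ l ∈ Finset.Icc 1 L, R l / Nstar l = S / B * Real.sqrt (R l * C l) := by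
      intro l hl
      rw [hNstar l hl, hCR]
      have hCl := hC l hl
      have hRl := hR l hl
      field_simp
      have h4 : Real.sqrt (R l / C l) * Real.sqrt (R l * C l) = R l := by
        rw [← Real.sqrt_mul (div_pos hRl hCl).le,
          show R l / C l * (R l * C l) = R l ^ 2 by
            rw [div_mul_eq_mul_div, div_eq_iff hCl.ne']; ring,
          Real.sqrt_sq hRl.le]
      linear_combination (-1 : ℝ) * h4
    rw [Finset.sum_congr rfl this, ← Finset.mul_sum, ← hS]
    rw [hB]
    field_simp
end
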